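/- arXiv:2403.09187 — 8 statements merged into one kernel-verified Lean document; each statement's English description precedes it below -/
import Mathlib

section
/- The function h(x) = sech((2L+1)·arcsech(x)) is monotonically increasing and convex on the interval x ∈ (0,1). -/
/-- Inverse hyperbolic cosine. -/
noncomputable def arcosh (x : ℝ) : ℝ := Real.log (x + Real.sqrt (x ^ 2 - 1))

/-- Hyperbolic secant. -/
noncomputable def sech (x : ℝ) : ℝ := 1 / Real.cosh x

/-- Inverse hyperbolic secant on `(0,1)`: `arcsech x = arcosh (1/x)`. -/
noncomputable def arcsech (x : ℝ) : ℝ := arcosh (1 / x)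

namespace GroverAux

open Real

lemma inner_pos {y : ℝ} (hy : 1 ≤ y) : 0 < y + Real.sqrt (y ^ 2 - 1) := by
  have := Real.sqrt_nonneg (y ^ 2 - 1); linarith

lemma sqrt_sq_sub_one {y : ℝ} (hy : 1 ≤ y) : (Real.sqrt (y ^ 2 - 1)) ^ 2 = y ^ 2 - 1 :=
  Real.sq_sqrt (by nlinarith)

lemma inner_inv {y : ℝ} (hy : 1 ≤ y) :
    (y + Real.sqrt (y ^ 2 - 1))⁻¹ = y - Real.sqrt (y ^ 2 - 1) :=
  inv_eq_of_mul_eq_one_right (by linear_combination -sqrt_sq_sub_one hy)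

lemma cosh_arcosh {y : ℝ} (hy : 1 ≤ y) : Real.cosh (_root_.arcosh y) = y := by
  rw [_root_.arcosh, Real.cosh_log (inner_pos hy), inner_inv hy]; ring

lemma sinh_arcosh {y : ℝ} (hy : 1 ≤ y) : Real.sinh (_root_.arcosh y) = Real.sqrt (y ^ 2 - 1) := by
  rw [_root_.arcosh, Real.sinh_log (inner_pos hy), inner_inv hy]; ring

lemma arcosh_pos {y : ℝ} (hy : 1 < y) : 0 < _root_.arcosh y := by
  have h : (1 : ℝ) < y + Real.sqrt (y ^ 2 - 1) := by
    have := Real.sqrt_nonneg (y ^ 2 - 1); linarith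
  exact Real.log_pos h

lemma arcosh_lt_arcosh {y₁ y₂ : ℝ} (hy₁ : 1 ≤ y₁) (h : y₁ < y₂) : _root_.arcosh y₁ < _root_.arcosh y₂ := by
  have hs : Real.sqrt (y₁ ^ 2 - 1) ≤ Real.sqrt (y₂ ^ 2 - 1) :=
    Real.sqrt_le_sqrt (by nlinarith)
  exact Real.log_lt_log (inner_pos hy₁) (by linarith)

lemma hasDerivAt_arcosh {y : ℝ} (hy : 1 < y) :
    HasDerivAt _root_.arcosh (1 / Real.sqrt (y ^ 2 - 1)) y := by
  have h1 : (0:ℝ) < y ^ 2 - 1 := by nlinarith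
  have hs : 0 < Real.sqrt (y ^ 2 - 1) := Real.sqrt_pos.2 h1
  have hsq : (Real.sqrt (y ^ 2 - 1)) ^ 2 = y ^ 2 - 1 := Real.sq_sqrt h1.le
  have hin : HasDerivAt (fun y : ℝ => y ^ 2 - 1) (2 * y) y := by
    simpa using (hasDerivAt_pow 2 y).sub_const 1
  have hsqrt : HasDerivAt (fun y : ℝ => Real.sqrt (y ^ 2 - 1))
      (2 * y / (2 * Real.sqrt (y ^ 2 - 1))) y := hin.sqrt h1.ne'
  have hz : HasDerivAt (fun y : ℝ => y + Real.sqrt (y ^ 2 - 1))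
      (1 + 2 * y / (2 * Real.sqrt (y ^ 2 - 1))) y := (hasDerivAt_id y).add hsqrt
  have hzpos : 0 < y + Real.sqrt (y ^ 2 - 1) := inner_pos hy.le
  have := hz.log hzpos.ne'
  refine this.congr_deriv ?_
  field_simp
  nlinarith [hsq, hs, hzpos]

end GroverAux
section Part2
open Real

variable {x : ℝ}

lemma one_lt_inv_of (hx : x ∈ Set.Ioo (0:ℝ) 1) : 1 < 1 / x := by
  rw [lt_div_iff₀ hx.1]; linarith [hx.2]

lemma arcsech_pos (hx : x ∈ Set.Ioo (0:ℝ) 1) : 0 < arcsech x :=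
  GroverAux.arcosh_pos (one_lt_inv_of hx)

lemma sqrt_inv_eq (hx : x ∈ Set.Ioo (0:ℝ) 1) :
    Real.sqrt ((1 / x) ^ 2 - 1) = Real.sqrt (1 - x ^ 2) / x := by
  rw [show (1 / x) ^ 2 - 1 = (1 - x ^ 2) / x ^ 2 by have hx0 : x ≠ 0 := hx.1.ne'; field_simp,
    Real.sqrt_div (by nlinarith [hx.1, hx.2] : (0:ℝ) ≤ 1 - x ^ 2),
    Real.sqrt_sq hx.1.le]

lemma cosh_arcsech (hx : x ∈ Set.Ioo (0:ℝ) 1) : Real.cosh (arcsech x) = 1 / x :=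
  GroverAux.cosh_arcosh (one_lt_inv_of hx).le

lemma sinh_arcsech (hx : x ∈ Set.Ioo (0:ℝ) 1) :
    Real.sinh (arcsech x) = Real.sqrt (1 - x ^ 2) / x := by
  rw [arcsech, GroverAux.sinh_arcosh (one_lt_inv_of hx).le, sqrt_inv_eq hx]

lemma hasDerivAt_arcsech (hx : x ∈ Set.Ioo (0:ℝ) 1) :
    HasDerivAt arcsech (-(1 / (x * Real.sqrt (1 - x ^ 2)))) x := by
  have hx0 : x ≠ 0 := hx.1.ne'
  have hinv : HasDerivAt (fun y : ℝ => 1 / y) (-(x ^ 2)⁻¹) x := by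
    simpa [one_div] using hasDerivAt_inv hx0
  have h := (GroverAux.hasDerivAt_arcosh (one_lt_inv_of hx)).comp x hinv
  have hs : 0 < Real.sqrt (1 - x ^ 2) :=
    Real.sqrt_pos.2 (by nlinarith [hx.1, hx.2])
  refine h.congr_deriv ?_
  rw [sqrt_inv_eq hx]
  field_simp

lemma arcsech_antitone {x y : ℝ} (hx : x ∈ Set.Ioo (0:ℝ) 1) (hy : y ∈ Set.Ioo (0:ℝ) 1)
    (hxy : x ≤ y) : arcsech y ≤ arcsech x := by
  rcases eq_or_lt_of_le hxy with rfl | h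
  · exact le_refl _
  · exact (GroverAux.arcosh_lt_arcosh (one_lt_inv_of hy).le
      (by rw [div_lt_div_iff₀ hy.1 hx.1]; linarith)).le

/-- `sinh (n u) ≥ n sinh u` for `u ≥ 0`. -/
lemma sinh_nsmul_ge {u : ℝ} (hu : 0 ≤ u) : ∀ n : ℕ, (n : ℝ) * Real.sinh u ≤ Real.sinh (n * u)
  | 0 => by simp
  | (n + 1) => by
    have ih := sinh_nsmul_ge hu n
    have h1 : (1:ℝ) ≤ Real.cosh u := Real.one_le_cosh u
    have h2 : (1:ℝ) ≤ Real.cosh ((n:ℝ) * u) := Real.one_le_cosh _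
    have h3 : 0 ≤ Real.sinh ((n:ℝ) * u) := Real.sinh_nonneg_iff.2 (by positivity)
    have h4 : 0 ≤ Real.sinh u := Real.sinh_nonneg_iff.2 hu
    have : ((n:ℝ) + 1) * u = (n:ℝ) * u + u := by ring
    push_cast
    rw [this, Real.sinh_add]
    nlinarith

/-- `tanh (n u) ≤ n tanh u` in cleared form. -/
lemma tanh_nsmul_le {u : ℝ} (hu : 0 ≤ u) :
    ∀ n : ℕ, Real.sinh ((n:ℝ) * u) * Real.cosh u ≤ (n : ℝ) * Real.sinh u * Real.cosh ((n:ℝ) * u)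
  | 0 => by simp
  | (n + 1) => by
    have ih := tanh_nsmul_le hu n
    have h1 : (1:ℝ) ≤ Real.cosh u := Real.one_le_cosh u
    have h2 : (1:ℝ) ≤ Real.cosh ((n:ℝ) * u) := Real.one_le_cosh _
    have h3 : 0 ≤ Real.sinh ((n:ℝ) * u) := Real.sinh_nonneg_iff.2 (by positivity)
    have h4 : 0 ≤ Real.sinh u := Real.sinh_nonneg_iff.2 hu
    have he : ((n:ℝ) + 1) * u = (n:ℝ) * u + u := by ring
    push_cast
    rw [he, Real.sinh_add, Real.cosh_add]
    nlinarith [mul_le_mul_of_nonneg_right ih (by positivity : (0:ℝ) ≤ Real.cosh u),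
      mul_nonneg (mul_nonneg h4 h4) h3]

lemma key_ineq {u : ℝ} (hu : 0 ≤ u) (n : ℕ) :
    (n : ℝ) * ((3 - Real.cosh ((n:ℝ) * u)) * Real.sinh u) ≤
      (3 - Real.cosh u) * Real.sinh ((n:ℝ) * u) := by
  have ha := sinh_nsmul_ge hu n
  have hb := tanh_nsmul_le hu n
  nlinarith [ha, hb]

end Part2
noncomputable def gQ (t : ℝ) : ℝ := Real.sinh t / Real.cosh t ^ 2
noncomputable def gQ' (t : ℝ) : ℝ :=
  (Real.cosh t ^ 2 - 2 * Real.sinh t ^ 2) / Real.cosh t ^ 3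
noncomputable def gG (c t : ℝ) : ℝ := c * gQ (c * t) / gQ t

section Part3
open Real

lemma hasDerivAt_gQ (t : ℝ) : HasDerivAt gQ (gQ' t) t := by
  have hc : (0:ℝ) < Real.cosh t := Real.cosh_pos t
  have h := (Real.hasDerivAt_sinh t).div ((Real.hasDerivAt_cosh t).pow 2)
    (by positivity : Real.cosh t ^ 2 ≠ 0)
  unfold gQ gQ'
  refine h.congr_deriv ?_
  norm_num [Pi.pow_apply]
  field_simp

lemma gQ_pos {t : ℝ} (ht : 0 < t) : 0 < gQ t :=
  div_pos (Real.sinh_pos_iff.2 ht) (by positivity)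

lemma hasDerivAt_gG {c t : ℝ} (ht : 0 < t) :
    HasDerivAt (gG c)
      ((c * (gQ' (c * t) * c) * gQ t - c * gQ (c * t) * gQ' t) / gQ t ^ 2) t := by
  have h1 : HasDerivAt (fun t : ℝ => gQ (c * t)) (gQ' (c * t) * c) t :=
    (hasDerivAt_gQ (c * t)).comp t (by simpa using (hasDerivAt_id t).const_mul c)
  have h2 := (h1.const_mul c).div (hasDerivAt_gQ t) (gQ_pos ht).ne'
  exact h2

lemma core_ineq (n : ℕ) {t : ℝ} (ht : 0 ≤ t) :
    (n:ℝ) * (Real.cosh ((n:ℝ) * t) ^ 2 - 2 * Real.sinh ((n:ℝ) * t) ^ 2)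
        * Real.sinh t * Real.cosh t ≤
      Real.sinh ((n:ℝ) * t) * (Real.cosh t ^ 2 - 2 * Real.sinh t ^ 2)
        * Real.cosh ((n:ℝ) * t) := by
  have hkey := key_ineq (by linarith : (0:ℝ) ≤ 2 * t) n
  have e1 : (n:ℝ) * (2 * t) = 2 * ((n:ℝ) * t) := by ring
  rw [e1, Real.cosh_two_mul, Real.sinh_two_mul, Real.cosh_two_mul, Real.sinh_two_mul] at hkey
  have i1 : Real.sinh ((n:ℝ) * t) ^ 2 = Real.cosh ((n:ℝ) * t) ^ 2 - 1 := Real.sinh_sq _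
  have i2 : Real.sinh t ^ 2 = Real.cosh t ^ 2 - 1 := Real.sinh_sq _
  rw [i1, i2] at hkey ⊢
  ring_nf at hkey ⊢
  linarith [hkey]

lemma num_nonpos (n : ℕ) {t : ℝ} (ht : 0 < t) :
    (n:ℝ) * gQ' ((n:ℝ) * t) * gQ t ≤ gQ ((n:ℝ) * t) * gQ' t := by
  have hC : (0:ℝ) < Real.cosh t := Real.cosh_pos t
  have hCn : (0:ℝ) < Real.cosh ((n:ℝ) * t) := Real.cosh_pos _
  unfold gQ gQ'
  rw [show (n:ℝ) * ((Real.cosh ((n:ℝ)*t) ^ 2 - 2 * Real.sinh ((n:ℝ)*t) ^ 2) / Real.cosh ((n:ℝ)*t) ^ 3)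
        * (Real.sinh t / Real.cosh t ^ 2)
      = ((n:ℝ) * (Real.cosh ((n:ℝ)*t) ^ 2 - 2 * Real.sinh ((n:ℝ)*t) ^ 2) * Real.sinh t)
        / (Real.cosh ((n:ℝ)*t) ^ 3 * Real.cosh t ^ 2) by ring,
    show (Real.sinh ((n:ℝ)*t) / Real.cosh ((n:ℝ)*t) ^ 2)
        * ((Real.cosh t ^ 2 - 2 * Real.sinh t ^ 2) / Real.cosh t ^ 3)
      = (Real.sinh ((n:ℝ)*t) * (Real.cosh t ^ 2 - 2 * Real.sinh t ^ 2))
        / (Real.cosh ((n:ℝ)*t) ^ 2 * Real.cosh t ^ 3) by ring,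
    div_le_div_iff₀ (by positivity) (by positivity)]
  have h := core_ineq n ht.le
  nlinarith [h, mul_le_mul_of_nonneg_right h
    (by positivity : (0:ℝ) ≤ Real.cosh ((n:ℝ)*t) ^ 2 * Real.cosh t ^ 2)]

lemma gG_antitone (n : ℕ) : AntitoneOn (gG (n:ℝ)) (Set.Ioi (0:ℝ)) := by
  apply antitoneOn_of_deriv_nonpos (convex_Ioi 0)
  · intro t ht
    exact (hasDerivAt_gG ht).continuousAt.continuousWithinAt
  · rw [interior_Ioi]
    intro t ht
    exact (hasDerivAt_gG ht).differentiableAt.differentiableWithinAt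
  · rw [interior_Ioi]
    intro t ht
    rw [(hasDerivAt_gG ht).deriv]
    apply div_nonpos_of_nonpos_of_nonneg _ (by positivity)
    have h := num_nonpos n ht
    have hn0 : (0:ℝ) ≤ (n:ℝ) := Nat.cast_nonneg n
    nlinarith [h, hn0]

lemma gG_pos (n : ℕ) (hn : 1 ≤ n) {t : ℝ} (ht : 0 < t) : 0 < gG (n:ℝ) t := by
  have hc : (0:ℝ) < (n:ℝ) := by exact_mod_cast hn
  exact div_pos (mul_pos hc (gQ_pos (mul_pos hc ht))) (gQ_pos ht)

lemma hasDerivAt_f (n : ℕ) {x : ℝ} (hx : x ∈ Set.Ioo (0:ℝ) 1) :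
    HasDerivAt (fun x : ℝ => sech ((n:ℝ) * arcsech x)) (gG (n:ℝ) (arcsech x)) x := by
  have ht := arcsech_pos hx
  have ha := hasDerivAt_arcsech hx
  have h1 : HasDerivAt (fun x : ℝ => (n:ℝ) * arcsech x)
      ((n:ℝ) * -(1 / (x * Real.sqrt (1 - x ^ 2)))) x := ha.const_mul _
  have h2 : HasDerivAt (fun x : ℝ => Real.cosh ((n:ℝ) * arcsech x))
      (Real.sinh ((n:ℝ) * arcsech x) * ((n:ℝ) * -(1 / (x * Real.sqrt (1 - x ^ 2))))) x :=
    (Real.hasDerivAt_cosh _).comp x h1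
  have hC : Real.cosh ((n:ℝ) * arcsech x) ≠ 0 := (Real.cosh_pos _).ne'
  have h3 := (hasDerivAt_const x (1:ℝ)).div h2 hC
  have hfe : (fun x : ℝ => sech ((n:ℝ) * arcsech x))
      = fun x : ℝ => 1 / Real.cosh ((n:ℝ) * arcsech x) := by
    funext y; rw [sech]
  rw [hfe]
  refine h3.congr_deriv ?_
  have hs : 0 < Real.sqrt (1 - x ^ 2) := Real.sqrt_pos.2 (by nlinarith [hx.1, hx.2])
  have hx0 : (0:ℝ) < x := hx.1
  unfold gG gQ
  rw [cosh_arcsech hx, sinh_arcsech hx]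
  field_simp
  ring

lemma main (n : ℕ) (hn : 1 ≤ n) :
    StrictMonoOn (fun x : ℝ => sech ((n:ℝ) * arcsech x)) (Set.Ioo (0:ℝ) 1) ∧
      ConvexOn ℝ (Set.Ioo (0:ℝ) 1) (fun x : ℝ => sech ((n:ℝ) * arcsech x)) := by
  have hderiv : ∀ x ∈ Set.Ioo (0:ℝ) 1,
      HasDerivAt (fun x : ℝ => sech ((n:ℝ) * arcsech x)) (gG (n:ℝ) (arcsech x)) x :=
    fun x hx => hasDerivAt_f n hx
  have hdP : ∀ x ∈ Set.Ioo (0:ℝ) 1,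
      deriv (fun x : ℝ => sech ((n:ℝ) * arcsech x)) x = gG (n:ℝ) (arcsech x) :=
    fun x hx => (hderiv x hx).deriv
  have hcont : ContinuousOn (fun x : ℝ => sech ((n:ℝ) * arcsech x)) (Set.Ioo (0:ℝ) 1) :=
    fun x hx => (hderiv x hx).continuousAt.continuousWithinAt
  constructor
  · apply strictMonoOn_of_deriv_pos (convex_Ioo 0 1) hcont
    intro x hx
    rw [interior_Ioo] at hx
    rw [hdP x hx]
    exact gG_pos n hn (arcsech_pos hx)
  · apply MonotoneOn.convexOn_of_deriv (convex_Ioo 0 1) hcont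
    · rw [interior_Ioo]
      intro x hx
      exact (hderiv x hx).differentiableAt.differentiableWithinAt
    · rw [interior_Ioo]
      intro x hx y hy hxy
      rw [hdP x hx, hdP y hy]
      exact gG_antitone n (arcsech_pos hy) (arcsech_pos hx) (arcsech_antitone hx hy hxy)

end Part3

/-- The function `h(x) = sech ((2L+1) * arcsech x)` is monotonically increasing and
convex on the interval `(0,1)`. -/
theorem grover_step_monotone_convex (L : ℕ) (hL : 0 < L) :
    StrictMonoOn (fun x : ℝ => sech ((2 * L + 1 : ℝ) * arcsech x)) (Set.Ioo (0 : ℝ) 1) ∧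
      ConvexOn ℝ (Set.Ioo (0 : ℝ) 1) (fun x : ℝ => sech ((2 * L + 1 : ℝ) * arcsech x)) := by
  have h := main (2 * L + 1) (by omega)
  have hc : (2 * (L:ℝ) + 1) = ((2 * L + 1 : ℕ) : ℝ) := by push_cast; ring
  rw [hc]
  exact h
end

section
/- Let λ_1, ..., λ_d ≥ 0 with Σ_i λ_i = 1 and λ_1 = 1 - x for a mixedness parameter x ∈ [0,1). Define x' = 1 - (λ_1 + λ_1²)/(1 + Σ_i λ_i²). Then x'/x ≤ (1+x)/(2 - 2x + x²); in particular x' ≤ x/2 + O(x²) as x → 0. -/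
/-- Mixedness reduction rate of one interferential mixedness reduction round:
for a probability vector `λ` with largest entry `λ_0 = 1 - x`, `x ∈ [0,1)`, the new
mixedness `x' = 1 - (λ_0 + λ_0²)/(1 + Σ_i λ_i²)` satisfies
`x'/x ≤ (1+x)/(2-2x+x²)`; in particular `x' ≤ x/2 + O(x²)` (concretely
`x' ≤ x/2 + 2x²`). -/
theorem mixedness_reduction_rate {d : ℕ} (hd : 0 < d)
    (lam : Fin d → ℝ) (x : ℝ)
    (hnonneg : ∀ i, 0 ≤ lam i)
    (hsum : ∑ i, lam i = 1)
    (hmax : ∀ i, lam i ≤ lam ⟨0, hd⟩)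
    (hx : x ∈ Set.Ico (0 : ℝ) 1)
    (hlam0 : lam ⟨0, hd⟩ = 1 - x)
    (x' : ℝ)
    (hx' : x' = 1 - (lam ⟨0, hd⟩ + lam ⟨0, hd⟩ ^ 2) / (1 + ∑ i, lam i ^ 2)) :
    x' / x ≤ (1 + x) / (2 - 2 * x + x ^ 2) ∧ x' ≤ x / 2 + 2 * x ^ 2 := by
  obtain ⟨hx0, hx1⟩ := hx
  set i0 : Fin d := ⟨0, hd⟩
  set S : ℝ := ∑ i, lam i ^ 2 with hSdef
  -- sum over the rest
  have hsplit : lam i0 + ∑ i ∈ Finset.univ.erase i0, lam i = 1 := by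
    rw [Finset.add_sum_erase _ _ (Finset.mem_univ i0)]; exact hsum
  have hrest : ∑ i ∈ Finset.univ.erase i0, lam i = x := by
    have := hsplit; rw [hlam0] at this; linarith
  have hsplit2 : S = lam i0 ^ 2 + ∑ i ∈ Finset.univ.erase i0, lam i ^ 2 := by
    rw [hSdef, ← Finset.add_sum_erase _ _ (Finset.mem_univ i0)]
  have hrest2 : ∑ i ∈ Finset.univ.erase i0, lam i ^ 2 ≤ x ^ 2 := by
    calc ∑ i ∈ Finset.univ.erase i0, lam i ^ 2
        ≤ (∑ i ∈ Finset.univ.erase i0, lam i) ^ 2 :=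
          Finset.sum_sq_le_sq_sum_of_nonneg (fun i _ => hnonneg i)
      _ = x ^ 2 := by rw [hrest]
  have hSub : S ≤ (1 - x) ^ 2 + x ^ 2 := by
    rw [hsplit2, hlam0]; linarith
  have hSlb : (1 - x) ^ 2 ≤ S := by
    have h : 0 ≤ ∑ i ∈ Finset.univ.erase i0, lam i ^ 2 :=
      Finset.sum_nonneg fun i _ => sq_nonneg _
    rw [hsplit2, hlam0]; linarith
  have hD : 0 < 2 - 2 * x + x ^ 2 := by nlinarith [sq_nonneg (1 - x)]
  have hSpos : 0 < 1 + S := by nlinarith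
  have key : x' ≤ (x + x ^ 2) / (2 - 2 * x + x ^ 2) := by
    rw [hx', hlam0]
    rw [sub_le_iff_le_add, ← sub_le_iff_le_add']
    have h1 : 1 - (x + x ^ 2) / (2 - 2 * x + x ^ 2)
        = (2 - 3 * x) / (2 - 2 * x + x ^ 2) := by
      field_simp; ring
    rw [h1, div_le_div_iff₀ hD hSpos]
    nlinarith [sq_nonneg x, hSub, hSlb]
  constructor
  · rcases eq_or_lt_of_le hx0 with h0 | h0
    · rw [← h0, div_zero]; positivity
    · rw [div_le_div_iff₀ h0 hD]
      have := key
      rw [le_div_iff₀ hD] at this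
      nlinarith
  · calc x' ≤ (x + x ^ 2) / (2 - 2 * x + x ^ 2) := key
      _ ≤ x / 2 + 2 * x ^ 2 := by
        rw [div_le_iff₀ hD]
        nlinarith [sq_nonneg x, mul_nonneg hx0 (sq_nonneg x), sq_nonneg (x*x)]
end

section
/- Let x ∈ (0, 1/3] and let y_0 = x, y_j ≤ y_{j-1}·(1 + y_{j-1})/(2 - 2y_{j-1} + y_{j-1}²) for j ≥ 1. Then for any g > 1 there exists R = O(log g) such that y_R ≤ x/g; in particular since the factor (1+y)/(2-2y+y²) is monotone increasing in y on (0,1/3], y_R/y_0 ≤ ((1+x)/(2-2x+x²))^R, and (1+x)/(2-2x+x²) < 1 for x ∈ (0,1/3]. -/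
/-- Iterated mixedness reduction: if `y_0 = x ∈ (0, 1/3]` and each round satisfies
`y_{j+1} ≤ y_j (1+y_j)/(2-2y_j+y_j²)`, then (since the factor is monotone increasing
in `y` on `(0,1/3]` and `(1+x)/(2-2x+x²) < 1` there) `y_R ≤ x ((1+x)/(2-2x+x²))^R`
for every `R`, and for every `g > 1` there is `R = O(log g)` with `y_R ≤ x / g`. -/
theorem iterated_mixedness_reduction (x : ℝ) (y : ℕ → ℝ)
    (hx : x ∈ Set.Ioc (0 : ℝ) (1 / 3))
    (hy0 : y 0 = x)
    (hynn : ∀ j, 0 ≤ y j)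
    (hrec : ∀ j : ℕ, y (j + 1) ≤ y j * (1 + y j) / (2 - 2 * y j + y j ^ 2)) :
    (StrictMonoOn (fun t : ℝ => (1 + t) / (2 - 2 * t + t ^ 2)) (Set.Ioc (0 : ℝ) (1 / 3))) ∧
    (1 + x) / (2 - 2 * x + x ^ 2) < 1 ∧
    (∀ R : ℕ, y R ≤ x * ((1 + x) / (2 - 2 * x + x ^ 2)) ^ R) ∧
    (∃ C : ℝ, 0 < C ∧ ∀ g : ℝ, 1 < g →
      ∃ R : ℕ, (R : ℝ) ≤ C * (Real.log g + 1) ∧ y R ≤ x / g) := by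
  obtain ⟨hx0, hx13⟩ := hx
  set c : ℝ := (1 + x) / (2 - 2 * x + x ^ 2) with hc
  have hden : ∀ t : ℝ, 0 < 2 - 2 * t + t ^ 2 := fun t => by nlinarith [sq_nonneg (t - 1)]
  have hmono : StrictMonoOn (fun t : ℝ => (1 + t) / (2 - 2 * t + t ^ 2))
      (Set.Ioc (0 : ℝ) (1 / 3)) := by
    intro a ha b hb hab
    simp only
    rw [div_lt_div_iff₀ (hden a) (hden b)]
    have key : (1 + b) * (2 - 2 * a + a ^ 2) - (1 + a) * (2 - 2 * b + b ^ 2)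
        = (b - a) * (4 - a - b - a * b) := by ring
    have h1 : 0 < b - a := by linarith
    have h2 : a * b ≤ 1 / 9 := by nlinarith [ha.1, hb.1, ha.2, hb.2]
    nlinarith [mul_pos h1 (show (0:ℝ) < 4 - a - b - a * b by nlinarith [ha.2, hb.2])]
  have hclt : c < 1 := by
    rw [hc, div_lt_one (hden x)]
    nlinarith
  have hc0 : 0 ≤ c := div_nonneg (by linarith) (le_of_lt (hden x))
  -- main inductive bound
  have hmain : ∀ R : ℕ, y R ≤ x * c ^ R := by
    intro R
    induction R with
    | zero => simp [hy0]
    | succ n ih =>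
      have hyn := hynn n
      have hynx : y n ≤ x := by
        calc y n ≤ x * c ^ n := ih
        _ ≤ x * 1 := by
            have : c ^ n ≤ 1 := pow_le_one₀ hc0 (le_of_lt hclt)
            nlinarith
        _ = x := by ring
      have hstep : y n * (1 + y n) / (2 - 2 * y n + y n ^ 2) ≤ y n * c := by
        have h2 : y n * ((1 + x) / (2 - 2 * x + x ^ 2)) = y n * (1 + x) / (2 - 2 * x + x ^ 2) := by
          ring
        rw [div_le_iff₀ (hden (y n)), hc, h2, div_mul_eq_mul_div, le_div_iff₀ (hden x)]
        have key : y n * (1 + x) * (2 - 2 * y n + y n ^ 2)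
            - y n * (1 + y n) * (2 - 2 * x + x ^ 2)
            = y n * ((x - y n) * (4 - x - y n - x * y n)) := by ring
        have h4 : (0:ℝ) ≤ 4 - x - y n - x * y n := by nlinarith
        have hpos := mul_nonneg hyn (mul_nonneg (sub_nonneg.mpr hynx) h4)
        linarith
      calc y (n + 1) ≤ y n * (1 + y n) / (2 - 2 * y n + y n ^ 2) := hrec n
      _ ≤ y n * c := hstep
      _ ≤ (x * c ^ n) * c := by nlinarith
      _ = x * c ^ (n + 1) := by ring
  refine ⟨hmono, hclt, hmain, ?_⟩
  -- the O(log g) part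
  have hcpos : 0 < c := div_pos (by linarith) (hden x)
  have hL : 0 < -Real.log c := by
    have := Real.log_neg hcpos hclt
    linarith
  set L : ℝ := -Real.log c with hLdef
  refine ⟨max (1 / L) 1, lt_of_lt_of_le one_pos (le_max_right _ _), ?_⟩
  intro g hg
  have hlg : 0 < Real.log g := Real.log_pos hg
  refine ⟨⌈Real.log g / L⌉₊, ?_, ?_⟩
  · have h1 : (⌈Real.log g / L⌉₊ : ℝ) < Real.log g / L + 1 :=
      Nat.ceil_lt_add_one (div_nonneg hlg.le hL.le)
    have h2 : Real.log g / L + 1 ≤ max (1 / L) 1 * (Real.log g + 1) := by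
      have ha : Real.log g / L ≤ max (1 / L) 1 * Real.log g := by
        rw [div_eq_mul_one_div, mul_comm]
        exact mul_le_mul_of_nonneg_right (le_max_left _ _) hlg.le
      have hb : (1 : ℝ) ≤ max (1 / L) 1 * 1 := by
        simpa using le_max_right (1 / L) (1 : ℝ)
      nlinarith
    linarith
  · set R : ℕ := ⌈Real.log g / L⌉₊ with hR
    have hRL : Real.log g ≤ (R : ℝ) * L := by
      have := Nat.le_ceil (Real.log g / L)
      rw [div_le_iff₀ hL] at this
      simp only [hR]
      linarith
    have hpow : c ^ R ≤ 1 / g := by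
      have : c ^ R = Real.exp ((R : ℝ) * Real.log c) := by
        rw [← Real.rpow_natCast c R, Real.rpow_def_of_pos hcpos, mul_comm]
      rw [this]
      have h1g : (1 : ℝ) / g = Real.exp (-(Real.log g)) := by
        rw [Real.exp_neg, Real.exp_log (by linarith)]
        rw [one_div]
      rw [h1g]
      apply Real.exp_le_exp.mpr
      have : Real.log c = -L := by rw [hLdef]; ring
      rw [this]
      nlinarith
    calc y R ≤ x * c ^ R := hmain R
    _ ≤ x * (1 / g) := by nlinarith
    _ = x / g := by ring
end

section
/- For density matrices ρ, σ on ℂ^d, the density matrix exponentiation channel satisfies Tr_1[e^{-iŜs}(ρ ⊗ σ)e^{iŜs}] = cos²(s)·σ - i·sin(s)cos(s)·[ρ,σ] + sin²(s)·ρ, where Ŝ is the swap operator on ℂ^d ⊗ ℂ^d. -/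
open Matrix ComplexOrder

/-- Partial trace over the first tensor factor of a matrix on `ℂ^d ⊗ ℂ^d`. -/
noncomputable def ptrace1 {d : ℕ} (M : Matrix (Fin d × Fin d) (Fin d × Fin d) ℂ) :
    Matrix (Fin d) (Fin d) ℂ :=
  fun a b => ∑ k : Fin d, M (k, a) (k, b)

/-- Kronecker product `ρ ⊗ σ` of two `d × d` matrices, on `ℂ^d ⊗ ℂ^d`. -/
noncomputable def tensor2 {d : ℕ} (ρ σ : Matrix (Fin d) (Fin d) ℂ) :
    Matrix (Fin d × Fin d) (Fin d × Fin d) ℂ :=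
  fun p q => ρ p.1 q.1 * σ p.2 q.2

/-- The swap operator `Ŝ` on `ℂ^d ⊗ ℂ^d`, `Ŝ(|j⟩⊗|k⟩) = |k⟩⊗|j⟩`. -/
noncomputable def swapOp (d : ℕ) : Matrix (Fin d × Fin d) (Fin d × Fin d) ℂ :=
  fun p q => if p.1 = q.2 ∧ p.2 = q.1 then 1 else 0

lemma swapOp_sq (d : ℕ) : swapOp d * swapOp d = 1 := by
  ext p q
  rw [Matrix.mul_apply]
  rw [Finset.sum_eq_single (p.2, p.1)]
  · simp [swapOp, Matrix.one_apply, Prod.ext_iff, and_comm]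
  · intro r _ hr
    simp only [swapOp]
    rw [if_neg, zero_mul]
    rintro ⟨h1, h2⟩
    exact hr (by simp [Prod.ext_iff, ← h1, ← h2])
  · simp

attribute [local instance] Matrix.linftyOpNormedRing Matrix.linftyOpNormedAlgebra

set_option maxHeartbeats 1000000 in
lemma exp_smul_swapOp {d : ℕ} (c : ℂ) :
    NormedSpace.exp (c • swapOp d)
      = Complex.cosh c • (1 : Matrix (Fin d × Fin d) (Fin d × Fin d) ℂ)
        + Complex.sinh c • swapOp d := by
  have h := NormedSpace.exp_series_hasSum_exp' (𝕂 := ℂ) (c • swapOp d)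
  have hpow : ∀ n : ℕ, ((n.factorial : ℂ))⁻¹ • (c • swapOp d) ^ n
      = (c ^ n / (n.factorial : ℂ)) • (swapOp d) ^ n := by
    intro n
    rw [smul_pow, smul_smul, div_eq_mul_inv, mul_comm]
  have hSpowE : ∀ k : ℕ, swapOp d ^ (2 * k) = 1 := by
    intro k
    rw [pow_mul]
    rw [sq]
    rw [swapOp_sq, one_pow]
  have hSpowO : ∀ k : ℕ, swapOp d ^ (2 * k + 1) = swapOp d := by
    intro k
    rw [pow_succ, hSpowE, one_mul]
  have heven : HasSum (fun k : ℕ => (((2 * k).factorial : ℂ))⁻¹ • (c • swapOp d) ^ (2 * k))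
      (Complex.cosh c • (1 : Matrix (Fin d × Fin d) (Fin d × Fin d) ℂ)) := by
    have := (Complex.hasSum_cosh c).smul_const
      (1 : Matrix (Fin d × Fin d) (Fin d × Fin d) ℂ)
    convert this using 2 with k
    rw [hpow, hSpowE]
  have hodd : HasSum (fun k : ℕ => (((2 * k + 1).factorial : ℂ))⁻¹ • (c • swapOp d) ^ (2 * k + 1))
      (Complex.sinh c • swapOp d) := by
    have := (Complex.hasSum_sinh c).smul_const (swapOp d)
    convert this using 2 with k
    rw [hpow, hSpowO]
  exact h.unique (heven.even_add_odd hodd)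

lemma swapOp_mul {d : ℕ} (M : Matrix (Fin d × Fin d) (Fin d × Fin d) ℂ) (p q) :
    (swapOp d * M) p q = M (p.2, p.1) q := by
  rw [Matrix.mul_apply, Finset.sum_eq_single (p.2, p.1)]
  · simp [swapOp]
  · intro r _ hr
    simp only [swapOp]
    rw [if_neg, zero_mul]
    rintro ⟨h1, h2⟩
    exact hr (by simp [Prod.ext_iff, ← h1, ← h2])
  · simp

lemma mul_swapOp {d : ℕ} (M : Matrix (Fin d × Fin d) (Fin d × Fin d) ℂ) (p q) :
    (M * swapOp d) p q = M p (q.2, q.1) := by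
  rw [Matrix.mul_apply, Finset.sum_eq_single (q.2, q.1)]
  · simp [swapOp]
  · intro r _ hr
    simp only [swapOp]
    rw [if_neg, mul_zero]
    rintro ⟨h1, h2⟩
    exact hr (by simp [Prod.ext_iff, h1, h2])
  · simp

lemma ptrace1_add {d : ℕ} (M N : Matrix (Fin d × Fin d) (Fin d × Fin d) ℂ) :
    ptrace1 (M + N) = ptrace1 M + ptrace1 N := by
  ext a b
  simp [ptrace1, Finset.sum_add_distrib]

lemma ptrace1_sub {d : ℕ} (M N : Matrix (Fin d × Fin d) (Fin d × Fin d) ℂ) :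
    ptrace1 (M - N) = ptrace1 M - ptrace1 N := by
  ext a b
  simp [ptrace1, Finset.sum_sub_distrib]

lemma ptrace1_smul {d : ℕ} (c : ℂ) (M : Matrix (Fin d × Fin d) (Fin d × Fin d) ℂ) :
    ptrace1 (c • M) = c • ptrace1 M := by
  ext a b
  simp [ptrace1, Finset.mul_sum]

section tensor
variable {d : ℕ} (ρ σ : Matrix (Fin d) (Fin d) ℂ)

lemma ptrace1_tensor2 (h : ρ.trace = 1) : ptrace1 (tensor2 ρ σ) = σ := by
  ext a b
  simp only [ptrace1, tensor2]
  rw [← Finset.sum_mul]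
  have : ∑ k : Fin d, ρ k k = 1 := h
  rw [this, one_mul]

lemma ptrace1_swap_mul : ptrace1 (swapOp d * tensor2 ρ σ) = ρ * σ := by
  ext a b
  simp only [ptrace1, swapOp_mul]
  simp only [tensor2, Matrix.mul_apply]

lemma ptrace1_mul_swap : ptrace1 (tensor2 ρ σ * swapOp d) = σ * ρ := by
  ext a b
  simp only [ptrace1, mul_swapOp]
  simp only [tensor2, Matrix.mul_apply]
  exact Finset.sum_congr rfl fun k _ => mul_comm _ _

lemma ptrace1_swap_mul_swap (h : σ.trace = 1) :
    ptrace1 (swapOp d * tensor2 ρ σ * swapOp d) = ρ := by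
  ext a b
  simp only [ptrace1, mul_swapOp, swapOp_mul]
  simp only [tensor2]
  rw [← Finset.mul_sum]
  have : ∑ k : Fin d, σ k k = 1 := h
  rw [this, mul_one]

end tensor

/-- Explicit form of the density matrix exponentiation channel:
`Tr_1[e^{-iŜs}(ρ ⊗ σ)e^{iŜs}] = cos²(s)·σ - i·sin(s)cos(s)·[ρ,σ] + sin²(s)·ρ`. -/
theorem dme_explicit_form {d : ℕ} (hd : 0 < d) (s : ℝ)
    (ρ σ : Matrix (Fin d) (Fin d) ℂ)
    (hρ : ρ.PosSemidef) (hρtr : ρ.trace = 1)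
    (hσ : σ.PosSemidef) (hσtr : σ.trace = 1) :
    ptrace1 (NormedSpace.exp (-(Complex.I * s) • swapOp d) * tensor2 ρ σ *
        NormedSpace.exp ((Complex.I * s) • swapOp d))
      = ((Real.cos s ^ 2 : ℝ) : ℂ) • σ
        - (Complex.I * Real.sin s * Real.cos s) • (ρ * σ - σ * ρ)
        + ((Real.sin s ^ 2 : ℝ) : ℂ) • ρ := by
  set a : ℂ := (Real.cos s : ℂ) with ha
  set b : ℂ := Complex.I * Real.sin s with hb
  have hexp1 : NormedSpace.exp (-(Complex.I * s) • swapOp d)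
      = a • (1 : Matrix (Fin d × Fin d) (Fin d × Fin d) ℂ) - b • swapOp d := by
    rw [exp_smul_swapOp]
    have h1 : Complex.cosh (-(Complex.I * s)) = a := by
      rw [Complex.cosh_neg, mul_comm, Complex.cosh_mul_I, ha]
      exact (Complex.ofReal_cos s).symm
    have h2 : Complex.sinh (-(Complex.I * s)) = -b := by
      rw [Complex.sinh_neg, mul_comm, Complex.sinh_mul_I, hb, ← Complex.ofReal_sin]
      ring
    rw [h1, h2, neg_smul, sub_eq_add_neg]
  have hexp2 : NormedSpace.exp ((Complex.I * s) • swapOp d)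
      = a • (1 : Matrix (Fin d × Fin d) (Fin d × Fin d) ℂ) + b • swapOp d := by
    rw [exp_smul_swapOp]
    have h1 : Complex.cosh (Complex.I * s) = a := by
      rw [mul_comm, Complex.cosh_mul_I, ha]
      exact (Complex.ofReal_cos s).symm
    have h2 : Complex.sinh (Complex.I * s) = b := by
      rw [mul_comm, Complex.sinh_mul_I, hb, ← Complex.ofReal_sin]
      ring
    rw [h1, h2]
  rw [hexp1, hexp2]
  set T := tensor2 ρ σ with hT
  have hprod : (a • (1 : Matrix (Fin d × Fin d) (Fin d × Fin d) ℂ) - b • swapOp d) * T *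
        (a • (1 : Matrix (Fin d × Fin d) (Fin d × Fin d) ℂ) + b • swapOp d)
      = (a * a) • T + (a * b) • (T * swapOp d) - (a * b) • (swapOp d * T)
          - (b * b) • (swapOp d * T * swapOp d) := by
    simp only [Matrix.sub_mul, Matrix.mul_add, Matrix.smul_mul, Matrix.mul_smul,
      Matrix.one_mul, Matrix.mul_one, smul_smul, Matrix.mul_assoc, smul_sub, smul_add]
    rw [mul_comm b a]
    abel
  rw [hprod, ptrace1_sub, ptrace1_sub, ptrace1_add, ptrace1_smul, ptrace1_smul,
    ptrace1_smul, ptrace1_smul, ptrace1_tensor2 ρ σ hρtr, ptrace1_swap_mul,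
    ptrace1_mul_swap, ptrace1_swap_mul_swap ρ σ hσtr]
  have hab : a * b = Complex.I * Real.sin s * Real.cos s := by rw [ha, hb]; ring
  have ha2 : a * a = ((Real.cos s ^ 2 : ℝ) : ℂ) := by rw [ha]; push_cast; ring
  have hb2 : b * b = -((Real.sin s ^ 2 : ℝ) : ℂ) := by
    rw [hb]
    have : Complex.I * ↑(Real.sin s) * (Complex.I * ↑(Real.sin s))
        = Complex.I * Complex.I * (Real.sin s * Real.sin s) := by ring
    rw [this, Complex.I_mul_I]
    push_cast
    ring
  rw [hab, ha2, hb2, smul_sub, neg_smul]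
  abel
end

section
/- Let ψ and φ be pure state density matrices on ℂ^d and let E_s(φ) = cos²(s)φ - i sin(s)cos(s)[ψ,φ] + sin²(s)ψ be the output of density matrix exponentiation with pure instruction ψ. Then the purity satisfies Tr[(E_s(φ))²] = 1 - 2sin²(s)cos²(s)(1 - |⟨ψ|φ⟩|²)², which is strictly less than 1 whenever sin(2s) ≠ 0 and ψ ≠ φ. -/
open Matrix ComplexOrder

lemma rank_one_sandwich {d : ℕ} (ψ : Matrix (Fin d) (Fin d) ℂ)
    (hh : ψ.IsHermitian) (hp : ψ * ψ = ψ) (ht : ψ.trace = 1)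
    (M : Matrix (Fin d) (Fin d) ℂ) :
    ψ * M * ψ = (ψ * M).trace • ψ := by
  classical
  set U : Matrix (Fin d) (Fin d) ℂ := ↑(hh.eigenvectorUnitary) with hU
  have hUU : star U * U = 1 := by simp [hU]
  have hUU' : U * star U = 1 := by simp [hU]
  set lam := hh.eigenvalues with hlam
  set D : Matrix (Fin d) (Fin d) ℂ := diagonal (fun i => (lam i : ℂ)) with hD
  have hspec : ψ = U * D * star U := by
    exact hh.spectral_theorem
  have hDψ : D = star U * ψ * U := by
    rw [hspec]; rw [Matrix.mul_assoc, Matrix.mul_assoc, hUU, Matrix.mul_one,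
      ← Matrix.mul_assoc, hUU, Matrix.one_mul]
  have hD2 : D * D = D := by
    rw [hDψ]
    calc (star U * ψ * U) * (star U * ψ * U)
        = star U * (ψ * (U * star U) * ψ) * U := by noncomm_ring
      _ = star U * ψ * U := by rw [hUU']; noncomm_ring [hp]
  have hlam01 : ∀ i, lam i = 0 ∨ lam i = 1 := by
    intro i
    have h1 : ((lam i : ℂ)) * (lam i) = (lam i) := by
      have := congrArg (fun A => A i i) hD2
      simpa [hD, diagonal_mul_diagonal, diagonal_apply_eq] using this
    have h2 : (lam i) * (lam i) = lam i := by exact_mod_cast h1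
    exact IsIdempotentElem.iff_eq_zero_or_one.mp h2
  have hsum : ∑ i, lam i = 1 := by
    have htr : ψ.trace = D.trace := by
      rw [hspec, Matrix.trace_mul_cycle, hUU, Matrix.one_mul]
    rw [ht] at htr
    have : (1 : ℂ) = ((∑ i, lam i : ℝ) : ℂ) := by
      rw [htr]; simp [hD, Matrix.trace, Matrix.diag]
    exact_mod_cast this.symm
  obtain ⟨j, hj⟩ : ∃ j, lam j = 1 := by
    by_contra hcon
    push_neg at hcon
    have : ∀ i, lam i = 0 := fun i => (hlam01 i).resolve_right (hcon i)
    simp [this] at hsum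
  have hzero : ∀ i, i ≠ j → lam i = 0 := by
    intro i hij
    by_contra hne
    have hi1 : lam i = 1 := (hlam01 i).resolve_left hne
    have hle : (2 : ℝ) ≤ ∑ k, lam k := by
      calc (2:ℝ) = lam i + lam j := by rw [hi1, hj]; norm_num
        _ = ∑ k ∈ ({i, j} : Finset (Fin d)), lam k := by
            rw [Finset.sum_pair hij]
        _ ≤ ∑ k, lam k := Finset.sum_le_sum_of_subset_of_nonneg
            (Finset.subset_univ _) (fun k _ _ => by
              rcases hlam01 k with h | h <;> simp [h])
    rw [hsum] at hle; linarith
  have hfun : (fun i => ((lam i : ℂ))) = fun i => if i = j then 1 else 0 := by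
    funext i
    by_cases hij : i = j
    · simp [hij, hj]
    · simp [hij, hzero i hij]
  set N := star U * M * U with hN
  have hEN : D * N * D = (N j j) • D := by
    rw [hD, hfun]
    ext a b
    simp only [diagonal_mul, mul_diagonal, Matrix.smul_apply, diagonal_apply, smul_eq_mul]
    by_cases ha : a = j <;> by_cases hb : b = j
    · simp [ha, hb]
    · simp [ha, hb]
      exact fun h => absurd h.symm hb
    · simp [ha, hb]
    · simp [ha, hb]
  have htrDN : (D * N).trace = N j j := by
    rw [hD, hfun, Matrix.trace]
    simp [Matrix.diag, diagonal_mul]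
  have htrace : (ψ * M).trace = N j j := by
    have h1 : ψ * M = U * (D * (star U * M)) := by rw [hspec]; noncomm_ring
    rw [h1, Matrix.trace_mul_comm, ← htrDN]
    congr 1
    rw [hN]; noncomm_ring
  have hfinal : ψ * M * ψ = U * (D * N * D) * star U := by
    rw [hspec, hN]; noncomm_ring
  rw [hfinal, hEN, htrace]
  rw [hspec]
  rw [Matrix.mul_smul, Matrix.smul_mul]


lemma trace_conj_self_zero' {d : ℕ} (A : Matrix (Fin d) (Fin d) ℂ)
    (h : (Aᴴ * A).trace = 0) : A = 0 := by
  have hre : ∑ j, ∑ i, Complex.normSq (A i j) = 0 := by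
    have h2 : (Aᴴ * A).trace = ((∑ j, ∑ i, Complex.normSq (A i j) : ℝ) : ℂ) := by
      push_cast
      simp only [Matrix.trace, Matrix.diag, Matrix.mul_apply, conjTranspose_apply]
      congr 1
      funext j
      congr 1
      funext i
      exact (Complex.normSq_eq_conj_mul_self).symm ▸ rfl
    rw [h] at h2
    exact_mod_cast h2.symm
  ext i j
  have hnn : ∀ j ∈ Finset.univ, (0:ℝ) ≤ ∑ i, Complex.normSq (A i j) :=
    fun j _ => Finset.sum_nonneg fun i _ => Complex.normSq_nonneg _
  have hj := (Finset.sum_eq_zero_iff_of_nonneg hnn).mp hre j (Finset.mem_univ j)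
  have hi := (Finset.sum_eq_zero_iff_of_nonneg
    (fun i _ => Complex.normSq_nonneg (A i j))).mp hj i (Finset.mem_univ i)
  simpa using Complex.normSq_eq_zero.mp hi

/-- Purity loss of density matrix exponentiation with a pure instruction: for pure
states `ψ, φ` (rank-one projections) and
`E_s(φ) = cos²(s)φ - i sin(s)cos(s)[ψ,φ] + sin²(s)ψ`, the purity is
`Tr[(E_s(φ))²] = 1 - 2 sin²(s) cos²(s) (1 - |⟨ψ|φ⟩|²)²`, which is strictly less
than `1` whenever `sin(2s) ≠ 0` and `ψ ≠ φ`. -/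
theorem dme_purity_loss {d : ℕ} (hd : 0 < d) (s : ℝ)
    (ψ φ : Matrix (Fin d) (Fin d) ℂ)
    (hψh : ψ.IsHermitian) (hψproj : ψ * ψ = ψ) (hψtr : ψ.trace = 1)
    (hφh : φ.IsHermitian) (hφproj : φ * φ = φ) (hφtr : φ.trace = 1)
    (E : Matrix (Fin d) (Fin d) ℂ)
    (hE : E = ((Real.cos s ^ 2 : ℝ) : ℂ) • φ
        - (Complex.I * Real.sin s * Real.cos s) • (ψ * φ - φ * ψ)
        + ((Real.sin s ^ 2 : ℝ) : ℂ) • ψ) :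
    (E * E).trace
        = 1 - 2 * (Real.sin s ^ 2 : ℂ) * (Real.cos s ^ 2 : ℂ)
            * (1 - (ψ * φ).trace) ^ 2 ∧
      (Real.sin (2 * s) ≠ 0 → ψ ≠ φ → ((E * E).trace).re < 1) := by
  set t : ℂ := (ψ * φ).trace with htdef
  have hkey1 : ψ * φ * ψ = t • ψ := rank_one_sandwich ψ hψh hψproj hψtr φ
  have htφψ : (φ * ψ).trace = t := by rw [htdef, Matrix.trace_mul_comm]
  have hkey2 : φ * ψ * φ = t • φ := by
    rw [← htφψ]; exact rank_one_sandwich φ hφh hφproj hφtr ψ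
  -- basic word reductions
  have hp2 : ∀ X : Matrix (Fin d) (Fin d) ℂ, ψ * (ψ * X) = ψ * X := by
    intro X; rw [← Matrix.mul_assoc, hψproj]
  have hf2 : ∀ X : Matrix (Fin d) (Fin d) ℂ, φ * (φ * X) = φ * X := by
    intro X; rw [← Matrix.mul_assoc, hφproj]
  have hw1 : (φ * (ψ * φ)).trace = t := by
    rw [← Matrix.mul_assoc, hkey2, trace_smul, hφtr, smul_eq_mul, mul_one]
  have hw2 : (ψ * (φ * ψ)).trace = t := by
    rw [← Matrix.mul_assoc, hkey1, trace_smul, hψtr, smul_eq_mul, mul_one]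
  have hw3 : (ψ * (φ * (ψ * φ))).trace = t * t := by
    have : ψ * (φ * (ψ * φ)) = (ψ * φ * ψ) * φ := by noncomm_ring
    rw [this, hkey1, Matrix.smul_mul, trace_smul, smul_eq_mul, htdef]
  have hw4 : (φ * (ψ * (φ * ψ))).trace = t * t := by
    have : φ * (ψ * (φ * ψ)) = (φ * ψ * φ) * ψ := by noncomm_ring
    rw [this, hkey2, Matrix.smul_mul, trace_smul, smul_eq_mul, htφψ]
  have hmain : (E * E).trace
      = 1 - 2 * (Real.sin s ^ 2 : ℂ) * (Real.cos s ^ 2 : ℂ) * (1 - t) ^ 2 := by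
    rw [hE]
    simp only [Matrix.add_mul, Matrix.mul_add, Matrix.sub_mul, Matrix.mul_sub,
      Matrix.smul_mul, Matrix.mul_smul, trace_add, trace_sub, trace_smul,
      smul_smul, smul_sub, smul_add, Matrix.mul_assoc, smul_eq_mul]
    simp only [hp2, hf2, hψproj, hφproj, hψtr, hφtr, hw1, hw2, hw3, hw4, htφψ, ← htdef]
    have hsc : ((Real.sin s : ℂ))^2 + ((Real.cos s : ℂ))^2 = 1 := by
      have := Real.sin_sq_add_cos_sq s
      exact_mod_cast congrArg (fun x : ℝ => (x : ℂ)) this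
    have hI : (Complex.I)^2 = -1 := Complex.I_sq
    simp only [Complex.ofReal_pow]
    set x := ((Real.sin s : ℝ) : ℂ)
    set y := ((Real.cos s : ℝ) : ℂ)
    linear_combination (x^2 + y^2 + 1) * hsc
      + (2*x^2*y^2*t^2 - 2*x^2*y^2*t) * hI
  refine ⟨hmain, ?_⟩
  intro hs2 hne
  -- t is real
  have hconj : (starRingEnd ℂ) t = t := by
    have h1 : ((ψ * φ)ᴴ).trace = (starRingEnd ℂ) t := by
      rw [Matrix.trace_conjTranspose, htdef]; rfl
    have h2 : (ψ * φ)ᴴ = φ * ψ := by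
      rw [Matrix.conjTranspose_mul, hψh.eq, hφh.eq]
    rw [h2, htφψ] at h1
    exact h1.symm
  obtain ⟨r, hr⟩ : ∃ r : ℝ, t = (r : ℂ) :=
    ⟨t.re, (Complex.conj_eq_iff_re.mp hconj).symm⟩
  -- t ≠ 1
  have htne : t ≠ 1 := by
    intro ht1
    apply hne
    have hA : ((ψ - φ)ᴴ * (ψ - φ)).trace = 0 := by
      have hAh : (ψ - φ)ᴴ = ψ - φ := by
        rw [Matrix.conjTranspose_sub, hψh.eq, hφh.eq]
      rw [hAh]
      simp only [Matrix.sub_mul, Matrix.mul_sub, trace_sub, hψproj, hφproj,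
        hψtr, hφtr, htφψ, ← htdef, ht1]
      ring
    have := trace_conj_self_zero' _ hA
    exact sub_eq_zero.mp this
  have hrne : r ≠ 1 := fun h => htne (by rw [hr, h]; norm_num)
  -- sin cos nonzero
  rw [Real.sin_two_mul] at hs2
  have hsin : Real.sin s ≠ 0 := fun h0 => hs2 (by rw [h0]; ring)
  have hcos : Real.cos s ≠ 0 := fun h0 => hs2 (by rw [h0]; ring)
  have hcast : (E * E).trace
      = ((1 - 2 * Real.sin s ^ 2 * Real.cos s ^ 2 * (1 - r) ^ 2 : ℝ) : ℂ) := by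
    rw [hmain, hr]; push_cast; ring
  rw [hcast, Complex.ofReal_re]
  have h1 : 0 < Real.sin s ^ 2 := lt_of_le_of_ne (sq_nonneg _) (Ne.symm (pow_ne_zero 2 hsin))
  have h2 : 0 < Real.cos s ^ 2 := lt_of_le_of_ne (sq_nonneg _) (Ne.symm (pow_ne_zero 2 hcos))
  have h3 : 0 < (1 - r) ^ 2 :=
    lt_of_le_of_ne (sq_nonneg _) (Ne.symm (pow_ne_zero 2 (sub_ne_zero.mpr (Ne.symm hrne))))
  nlinarith [mul_pos (mul_pos h1 h2) h3]
end

section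
/- Let ρ and σ be states on a 2-dimensional Hilbert space with eigenbasis {|0⟩,|1⟩} for ρ, where ψ = |0⟩⟨0|, ρ = (1-x)|0⟩⟨0| + x|1⟩⟨1| with x ∈ [0, ε], ε < 1/2, and let E_α^χ(σ) = e^{-iαχ}σe^{iαχ} denote the partial-rotation channel generated by χ. Then for any state σ (with off-diagonal entry q, |q| ≤ 1/2), the trace distance satisfies (1/2)‖E_α^ψ(σ) - E_α^ρ(σ)‖₁ = 2|q|·|sin(αx)|, so maximizing over σ gives (1/2)‖E_α^ψ - E_α^ρ‖_Tr = |sin(αx)| ≤ π·ε for α ∈ [-π, π]. -/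
open Matrix ComplexOrder

/-- Trace norm of a complex matrix: the sum of its singular values. -/
noncomputable def traceNorm {n : Type*} [Fintype n] [DecidableEq n]
    (A : Matrix n n ℂ) : ℝ :=
  ∑ i, Real.sqrt ((Matrix.posSemidef_conjTranspose_mul_self A).1.eigenvalues i)

/-- The partial-rotation channel `E_α^χ(σ) = e^{-iαχ} σ e^{iαχ}` generated by `χ`. -/
noncomputable def rotChan {n : Type*} [Fintype n] [DecidableEq n]
    (α : ℝ) (χ σ : Matrix n n ℂ) : Matrix n n ℂ :=
  NormedSpace.exp (-(Complex.I * α) • χ) * σ * NormedSpace.exp ((Complex.I * α) • χ)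

lemma eigenvalues_of_smul_one {n : Type*} [Fintype n] [DecidableEq n] (r : ℝ)
    {A : Matrix n n ℂ} (hA : A.IsHermitian) (h : A = (r : ℂ) • 1) (i : n) :
    hA.eigenvalues i = r := by
  have hv := hA.mulVec_eigenvectorBasis i
  obtain ⟨j, hj⟩ : ∃ j, hA.eigenvectorBasis i j ≠ 0 := by
    by_contra hc
    push_neg at hc
    have h0 := hA.eigenvectorBasis.toBasis.ne_zero i
    apply h0
    rw [OrthonormalBasis.coe_toBasis]
    ext j
    simpa using hc j
  subst h
  have h2 := congrFun hv j
  simp only [Matrix.smul_mulVec, Matrix.one_mulVec, Pi.smul_apply,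
    Complex.real_smul, smul_eq_mul] at h2
  have := mul_right_cancel₀ hj h2
  exact Complex.ofReal_injective this.symm

lemma traceNorm_eq_of_smul_one (A : Matrix (Fin 2) (Fin 2) ℂ) (r : ℝ)
    (h : Aᴴ * A = (r : ℂ) • 1) : traceNorm A = 2 * Real.sqrt r := by
  unfold traceNorm
  have he := fun i => eigenvalues_of_smul_one r (Matrix.posSemidef_conjTranspose_mul_self A).1 h i
  simp [he, Fin.sum_univ_two, two_mul]

lemma rotChan_diagonal_apply (α : ℝ) (d : Fin 2 → ℂ) (σ : Matrix (Fin 2) (Fin 2) ℂ)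
    (i j : Fin 2) :
    rotChan α (Matrix.diagonal d) σ i j
      = Complex.exp (-(Complex.I * α) * d i) * σ i j * Complex.exp (Complex.I * α * d j) := by
  rw [rotChan]
  have h1 : -(Complex.I * α) • Matrix.diagonal d
      = Matrix.diagonal fun k => -(Complex.I * α) * d k := by
    ext k l; by_cases hkl : k = l <;> simp [Matrix.diagonal_apply, hkl]
  have h2 : (Complex.I * α) • Matrix.diagonal d
      = Matrix.diagonal fun k => (Complex.I * α) * d k := by
    ext k l; by_cases hkl : k = l <;> simp [Matrix.diagonal_apply, hkl]
  rw [h1, h2, Matrix.exp_diagonal, Matrix.exp_diagonal, Pi.exp_def, Pi.exp_def]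
  simp only [Matrix.mul_diagonal, Matrix.diagonal_mul, ← Complex.exp_eq_exp_ℂ]

lemma key_conj_mul (α x : ℝ) (σ : Matrix (Fin 2) (Fin 2) ℂ) (hσ : σ.IsHermitian) :
    (rotChan α (Matrix.diagonal ![1,0]) σ
        - rotChan α (Matrix.diagonal ![((1-x:ℝ):ℂ), ((x:ℝ):ℂ)]) σ)ᴴ *
      (rotChan α (Matrix.diagonal ![1,0]) σ
        - rotChan α (Matrix.diagonal ![((1-x:ℝ):ℂ), ((x:ℝ):ℂ)]) σ)
    = (((2 * ‖σ 0 1‖ * |Real.sin (α*x)|)^2 : ℝ) : ℂ) • 1 := by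
  set D := rotChan α (Matrix.diagonal ![1,0]) σ
        - rotChan α (Matrix.diagonal ![((1-x:ℝ):ℂ), ((x:ℝ):ℂ)]) σ with hDdef
  set c : ℂ := Complex.exp (-(Complex.I * α)) * (1 - Complex.exp (2*x*α*Complex.I)) with hc
  have kk : ∀ (s z w u : ℂ), z + w = u
      → Complex.exp z * s * Complex.exp w = Complex.exp u * s := by
    intro s z w u h
    calc Complex.exp z * s * Complex.exp w = s * (Complex.exp z * Complex.exp w) := by ring
    _ = s * Complex.exp (z + w) := by rw [← Complex.exp_add]
    _ = Complex.exp u * s := by rw [h]; ring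
  have hD00 : D 0 0 = 0 := by
    simp only [hDdef, Matrix.sub_apply, rotChan_diagonal_apply, Matrix.cons_val_zero]
    rw [kk _ _ _ 0 (by ring), kk _ _ _ 0 (by ring), sub_self]
  have hD11 : D 1 1 = 0 := by
    simp only [hDdef, Matrix.sub_apply, rotChan_diagonal_apply, Matrix.cons_val_one,
      Matrix.head_cons]
    rw [kk _ _ _ 0 (by ring), kk _ _ _ 0 (by ring), sub_self]
  have hD01 : D 0 1 = c * σ 0 1 := by
    simp only [hDdef, Matrix.sub_apply, rotChan_diagonal_apply, Matrix.cons_val_zero,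
      Matrix.cons_val_one, Matrix.head_cons]
    rw [kk _ _ _ (-(Complex.I*(α:ℝ))) (by push_cast; ring),
      kk _ _ _ (-(Complex.I*(α:ℝ)) + 2*(x:ℝ)*(α:ℝ)*Complex.I) (by push_cast; ring),
      Complex.exp_add, hc]
    ring
  have hc' : (starRingEnd ℂ) c
      = Complex.exp (Complex.I*(α:ℝ)) * (1 - Complex.exp (-(2*(x:ℝ)*(α:ℝ)*Complex.I))) := by
    rw [hc]
    simp only [_root_.map_mul, map_sub, _root_.map_one, ← Complex.exp_conj, map_neg,
      Complex.conj_I, Complex.conj_ofReal, map_ofNat, mul_neg, neg_mul, neg_neg]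
  have hD10 : D 1 0 = (starRingEnd ℂ) (c * σ 0 1) := by
    have h10 : σ 1 0 = (starRingEnd ℂ) (σ 0 1) := (hσ.apply 1 0).symm
    rw [_root_.map_mul, hc']
    simp only [hDdef, Matrix.sub_apply, rotChan_diagonal_apply, Matrix.cons_val_zero,
      Matrix.cons_val_one, Matrix.head_cons, h10]
    rw [kk _ _ _ (Complex.I*(α:ℝ)) (by push_cast; ring),
      kk _ _ _ (Complex.I*(α:ℝ) + -(2*(x:ℝ)*(α:ℝ)*Complex.I)) (by push_cast; ring),
      Complex.exp_add]
    ring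
  have habs : ((starRingEnd ℂ) (c * σ 0 1) * (c * σ 0 1) : ℂ)
      = (((2 * ‖σ 0 1‖ * |Real.sin (α*x)|)^2 : ℝ) : ℂ) := by
    rw [mul_comm, Complex.mul_conj]
    congr 1
    rw [Complex.normSq_mul, hc, Complex.normSq_mul]
    have h1 : Complex.normSq (Complex.exp (-(Complex.I * ↑α))) = 1 := by
      rw [Complex.normSq_eq_norm_sq, Complex.norm_exp]
      simp
    have h2 : Complex.normSq (1 - Complex.exp (2*(x:ℝ)*(α:ℝ)*Complex.I))
        = 4 * Real.sin (α*x)^2 := by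
      rw [show (2*(x:ℂ)*(α:ℝ)*Complex.I) = ((2*x*α : ℝ) : ℂ) * Complex.I by push_cast; ring]
      rw [Complex.normSq_apply]
      simp only [Complex.sub_re, Complex.one_re, Complex.exp_ofReal_mul_I_re,
        Complex.sub_im, Complex.one_im, Complex.exp_ofReal_mul_I_im]
      have hcos : Real.cos (2*x*α) = 1 - 2 * Real.sin (α*x)^2 := by
        rw [show (2*x*α : ℝ) = 2*(α*x) by ring, Real.cos_two_mul]
        nlinarith [Real.sin_sq_add_cos_sq (α*x)]
      nlinarith [Real.sin_sq_add_cos_sq (2*x*α)]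
    rw [h1, h2, Complex.normSq_eq_norm_sq]
    rw [mul_pow, mul_pow, sq_abs]
    ring
  rw [Matrix.eta_fin_two D, hD00, hD01, hD10, hD11]
  ext i j
  fin_cases i <;> fin_cases j <;>
    simp only [Matrix.mul_apply, Fin.sum_univ_two, Matrix.conjTranspose_apply,
      Matrix.of_apply, Matrix.cons_val', Matrix.cons_val_zero, Matrix.cons_val_one,
      Matrix.head_cons, Matrix.head_fin_const, Matrix.empty_val', Matrix.cons_val_fin_one,
      star_zero, zero_mul, mul_zero, add_zero, zero_add, Matrix.smul_apply,
      Matrix.one_apply_eq, Matrix.one_apply_ne, smul_eq_mul, mul_one,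
      Complex.star_def, Complex.conj_conj, Fin.isValue, ne_eq, Fin.mk_zero, Fin.mk_one]
  · rw [mul_comm]; exact habs
  · simp
  · simp
  · exact habs

lemma offdiag_abs_le (σ : Matrix (Fin 2) (Fin 2) ℂ) (h : σ.PosSemidef)
    (ht : σ.trace = 1) : ‖σ 0 1‖ ≤ 1 / 2 := by
  set q := σ 0 1 with hq
  set a := ‖q‖ with ha
  have ha0 : 0 ≤ a := norm_nonneg q
  have h10 : σ 1 0 = (starRingEnd ℂ) q := (h.1.apply 1 0).symm
  have htr2 : σ 0 0 + σ 1 1 = 1 := by rw [← Matrix.trace_fin_two]; exact ht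
  have hqq : q * (starRingEnd ℂ) q = ((a : ℂ))^2 := by
    rw [Complex.mul_conj]
    norm_cast
    rw [ha, Complex.sq_norm]
  have h0 := h.dotProduct_mulVec_nonneg ![(a : ℂ), -((starRingEnd ℂ) q)]
  have hexpr : dotProduct (star ![(a : ℂ), -((starRingEnd ℂ) q)])
      (σ *ᵥ ![(a : ℂ), -((starRingEnd ℂ) q)]) = ((a^2 * (1 - 2*a) : ℝ) : ℂ) := by
    simp only [dotProduct, Matrix.mulVec, Fin.sum_univ_two, Pi.star_apply,
      Matrix.cons_val_zero, Matrix.cons_val_one, Matrix.head_cons, star_neg,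
      Complex.star_def, map_neg, Complex.conj_conj, Complex.conj_ofReal, h10]
    rw [← hq]
    push_cast
    linear_combination (σ 1 1 - 2*(a:ℂ)) * hqq + ((a:ℂ)^2) * htr2
  rw [hexpr] at h0
  have hreal : (0:ℝ) ≤ a^2 * (1 - 2*a) := Complex.zero_le_real.mp h0
  nlinarith [sq_nonneg a, sq_nonneg (a - 1/2)]

/-- On a qubit, with `ψ = |0⟩⟨0|` and `ρ = (1-x)|0⟩⟨0| + x|1⟩⟨1|`, `x ∈ [0, ε]`,
`ε < 1/2`: for every state `σ` with off-diagonal entry `q = σ₀₁`,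
`(1/2)‖E_α^ψ(σ) - E_α^ρ(σ)‖₁ = 2|q|·|sin(αx)|`; maximizing over `σ` gives
`(1/2)‖E_α^ψ - E_α^ρ‖_Tr = |sin(αx)| ≤ π·ε` for `α ∈ [-π, π]`. -/
theorem partial_reflection_mixedness_error (α x ε : ℝ)
    (hε : ε < 1 / 2) (hx : x ∈ Set.Icc (0 : ℝ) ε) (hα : α ∈ Set.Icc (-Real.pi) Real.pi)
    (ψ ρ : Matrix (Fin 2) (Fin 2) ℂ)
    (hψ : ψ = Matrix.single 0 0 1)
    (hρ : ρ = Matrix.diagonal ![((1 - x : ℝ) : ℂ), ((x : ℝ) : ℂ)]) :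
    (∀ σ : Matrix (Fin 2) (Fin 2) ℂ, σ.PosSemidef → σ.trace = 1 →
        (1 / 2) * traceNorm (rotChan α ψ σ - rotChan α ρ σ)
          = 2 * ‖σ 0 1‖ * |Real.sin (α * x)|) ∧
      IsGreatest {y : ℝ | ∃ σ : Matrix (Fin 2) (Fin 2) ℂ, σ.PosSemidef ∧ σ.trace = 1 ∧
          y = (1 / 2) * traceNorm (rotChan α ψ σ - rotChan α ρ σ)}
        |Real.sin (α * x)| ∧
      |Real.sin (α * x)| ≤ Real.pi * ε := by
  obtain ⟨hx0, hxε⟩ := hx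
  have hψd : ψ = Matrix.diagonal ![1, 0] := by
    rw [hψ]
    ext i j
    fin_cases i <;> fin_cases j <;>
      simp [Matrix.single, Matrix.diagonal_apply]
  have key : ∀ σ : Matrix (Fin 2) (Fin 2) ℂ, σ.PosSemidef → σ.trace = 1 →
      (1 / 2) * traceNorm (rotChan α ψ σ - rotChan α ρ σ)
        = 2 * ‖σ 0 1‖ * |Real.sin (α * x)| := by
    intro σ hσ _
    rw [hψd, hρ, traceNorm_eq_of_smul_one _ ((2 * ‖σ 0 1‖ * |Real.sin (α*x)|)^2)
      (key_conj_mul α x σ hσ.1), Real.sqrt_sq (by positivity)]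
    ring
  refine ⟨key, ⟨?_, ?_⟩, ?_⟩
  · -- membership
    refine ⟨!![1/2, 1/2; 1/2, 1/2], ?_, ?_, ?_⟩
    · have hmul : (!![1/2, 1/2; 1/2, 1/2] : Matrix (Fin 2) (Fin 2) ℂ)ᴴ
          * !![1/2, 1/2; 1/2, 1/2] = !![1/2, 1/2; 1/2, 1/2] := by
        ext i j
        fin_cases i <;> fin_cases j <;>
          simp [Matrix.mul_apply, Fin.sum_univ_two, map_ofNat] <;> norm_num
      exact hmul ▸ Matrix.posSemidef_conjTranspose_mul_self _
    · simp [Matrix.trace_fin_two]; norm_num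
    · rw [key _ ?psd ?tr]
      · norm_num
      case psd =>
        have hmul : (!![1/2, 1/2; 1/2, 1/2] : Matrix (Fin 2) (Fin 2) ℂ)ᴴ
            * !![1/2, 1/2; 1/2, 1/2] = !![1/2, 1/2; 1/2, 1/2] := by
          ext i j
          fin_cases i <;> fin_cases j <;>
            simp [Matrix.mul_apply, Fin.sum_univ_two, map_ofNat] <;> norm_num
        exact hmul ▸ Matrix.posSemidef_conjTranspose_mul_self _
      case tr => simp [Matrix.trace_fin_two]; norm_num
  · -- upper bound
    rintro y ⟨σ, hσ, htr, rfl⟩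
    rw [key σ hσ htr]
    have hq := offdiag_abs_le σ hσ htr
    have h1 : (0:ℝ) ≤ |Real.sin (α * x)| := abs_nonneg _
    nlinarith [norm_nonneg (σ 0 1)]
  · calc |Real.sin (α * x)| ≤ |α * x| := Real.abs_sin_le_abs
    _ = |α| * |x| := abs_mul α x
    _ ≤ Real.pi * ε := by
        refine mul_le_mul (abs_le.mpr ⟨hα.1, hα.2⟩) ?_ (abs_nonneg x) Real.pi_pos.le
        rwa [abs_of_nonneg hx0]
end

section
/- Let A and B be Hermitian operators on a Hilbert space and s > 0. Then for any unitarily invariant norm, ‖e^{-i√s·B}e^{-i√s·A}e^{i√s·B}e^{i√s·A} - e^{s[A,B]}‖ ≤ s^{3/2}·(‖[A,[A,B]]‖ + ‖[B,[B,A]]‖). -/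
open Matrix ComplexOrder

section GCBHelpers

open NormedSpace

namespace GCB

set_option linter.unusedSectionVars false

attribute [local instance] Matrix.linftyOpNormedRing Matrix.linftyOpNormedAlgebra

variable {n : Type*} [Fintype n] [DecidableEq n]

local notation "M" => Matrix n n ℂ

lemma real_smul_eq (r : ℝ) (X : M) : r • X = (r : ℂ) • X :=
  (algebraMap_smul ℂ r X).symm

lemma eexp_hasDerivAt (X : M) (u : ℝ) :
    HasDerivAt (fun v : ℝ => exp (v • X)) (exp (u • X) * X) u := by
  have h := hasDerivAt_exp_smul_const (𝕂 := ℝ) X u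
  exact h

lemma eexp_continuous (X : M) : Continuous fun v : ℝ => exp (v • X) :=
  exp_continuous.comp (continuous_id.smul continuous_const)

lemma eexp_mul_eexp_neg (X : M) (u : ℝ) : exp (u • X) * exp (u • (-X)) = 1 := by
  have h2 : Commute (u • X) (u • (-X)) :=
    (((Commute.refl X).neg_right).smul_left u).smul_right u
  rw [← Matrix.exp_add_of_commute _ _ h2]
  simp

lemma exp_mem_unitary {X : M} (hX : Xᴴ = -X) (u : ℝ) :
    exp (u • X) ∈ Matrix.unitaryGroup n ℂ := by
  rw [Matrix.mem_unitaryGroup_iff']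
  have h2 : Commute (u • (-X)) (u • X) :=
    (((Commute.refl X).neg_left).smul_left u).smul_right u
  have h1 : star (exp (u • X)) = exp (u • (-X)) := by
    rw [Matrix.star_eq_conjTranspose, ← Matrix.exp_conjTranspose]
    congr 1
    rw [real_smul_eq, Matrix.conjTranspose_smul, hX, real_smul_eq]
    simp
  rw [h1, ← Matrix.exp_add_of_commute _ _ h2]
  simp

section Seminorm

variable (ν : Matrix n n ℂ → ℝ)
  (hν_nonneg : ∀ X, 0 ≤ ν X)
  (hν_add : ∀ X Y, ν (X + Y) ≤ ν X + ν Y)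
  (hν_smul : ∀ (c : ℂ) X, ν (c • X) = ‖c‖ * ν X)

include hν_smul in
lemma nu_zero : ν 0 = 0 := by
  have := hν_smul 0 0
  simpa using this

include hν_smul in
lemma nu_neg (X : M) : ν (-X) = ν X := by
  have := hν_smul (-1) X
  simpa using this

include hν_add hν_smul in
lemma nu_sub_le (X Y : M) : ν (X - Y) ≤ ν X + ν Y := by
  have := hν_add X (-Y)
  rw [nu_neg ν hν_smul] at this
  simpa [sub_eq_add_neg] using this

include hν_nonneg hν_add hν_smul in
lemma nu_lipschitz : ∃ C : ℝ, 0 ≤ C ∧ ∀ X : M, ν X ≤ C * ‖X‖ := by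
  classical
  refine ⟨∑ p : n × n, ν (Matrix.single p.1 p.2 1), Finset.sum_nonneg fun p _ => hν_nonneg _, fun X => ?_⟩
  have hdecomp : X = ∑ p : n × n, (X p.1 p.2) • Matrix.single p.1 p.2 1 := by
    conv_lhs => rw [Matrix.matrix_eq_sum_single X]
    rw [← Finset.sum_product']
    refine Finset.sum_congr rfl fun p _ => ?_
    rw [Matrix.smul_single, smul_eq_mul, mul_one]
  have hsum : ∀ (s : Finset (n × n)) (f : n × n → M), ν (∑ p ∈ s, f p) ≤ ∑ p ∈ s, ν (f p) := by
    intro s f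
    induction s using Finset.cons_induction with
    | empty => simp [nu_zero ν hν_smul]
    | cons a s ha ih =>
      rw [Finset.sum_cons, Finset.sum_cons]
      exact (hν_add _ _).trans (by gcongr)
  have hentry : ∀ (i j : n), ‖X i j‖ ≤ ‖X‖ := by
    intro i j
    have h1 : ‖X i j‖₊ ≤ ∑ j' : n, ‖X i j'‖₊ :=
      Finset.single_le_sum (f := fun j' => ‖X i j'‖₊) (fun _ _ => zero_le) (Finset.mem_univ j)
    have h2 : (∑ j' : n, ‖X i j'‖₊) ≤ Finset.univ.sup fun i : n => ∑ j' : n, ‖X i j'‖₊ :=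
      Finset.le_sup (f := fun i : n => ∑ j' : n, ‖X i j'‖₊) (Finset.mem_univ i)
    have := (h1.trans h2)
    rw [← Matrix.linfty_opNNNorm_def X] at this
    exact_mod_cast this
  calc ν X = ν (∑ p : n × n, (X p.1 p.2) • Matrix.single p.1 p.2 1) := by rw [← hdecomp]
    _ ≤ ∑ p : n × n, ν ((X p.1 p.2) • Matrix.single p.1 p.2 1) := hsum _ _
    _ = ∑ p : n × n, ‖X p.1 p.2‖ * ν (Matrix.single p.1 p.2 1) := by
        exact Finset.sum_congr rfl fun p _ => hν_smul _ _
    _ ≤ ∑ p : n × n, ‖X‖ * ν (Matrix.single p.1 p.2 1) := by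
        refine Finset.sum_le_sum fun p _ => ?_
        exact mul_le_mul_of_nonneg_right (hentry _ _) (hν_nonneg _)
    _ = (∑ p : n × n, ν (Matrix.single p.1 p.2 1)) * ‖X‖ := by
        rw [Finset.sum_mul]
        exact Finset.sum_congr rfl fun p _ => mul_comm _ _

include hν_nonneg hν_add hν_smul in
lemma nu_continuous : Continuous ν := by
  obtain ⟨C, hC0, hC⟩ := nu_lipschitz ν hν_nonneg hν_add hν_smul
  have hlip : LipschitzWith C.toNNReal ν := by
    apply LipschitzWith.of_dist_le_mul
    intro x y
    rw [Real.dist_eq, dist_eq_norm]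
    have h1 : ν x - ν y ≤ ν (x - y) := by
      have := hν_add (x - y) y
      simp only [sub_add_cancel] at this
      linarith
    have h2 : ν y - ν x ≤ ν (x - y) := by
      have := hν_add (y - x) x
      simp only [sub_add_cancel] at this
      have hneg : ν (y - x) = ν (x - y) := by
        rw [← neg_sub x y, nu_neg ν hν_smul]
      linarith
    have h3 : |ν x - ν y| ≤ ν (x - y) := abs_sub_le_iff.2 ⟨h1, h2⟩
    refine h3.trans ((hC _).trans ?_)
    have : C ≤ (C.toNNReal : ℝ) := Real.le_coe_toNNReal C
    exact mul_le_mul_of_nonneg_right (by exact_mod_cast this) (norm_nonneg _)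
  exact hlip.continuous

include hν_nonneg hν_add hν_smul in
lemma nu_integral_le (g : ℝ → M) (hg : Continuous g) (a b : ℝ) (hab : a ≤ b) :
    ν (∫ u in a..b, g u) ≤ ∫ u in a..b, ν (g u) := by
  letI : TopologicalSpace M := PseudoMetricSpace.toUniformSpace.toTopologicalSpace
  have hint : IntervalIntegrable g MeasureTheory.volume a b := hg.intervalIntegrable a b
  have hintν : IntervalIntegrable (fun u => ν (g u)) MeasureTheory.volume a b :=
    ((nu_continuous ν hν_nonneg hν_add hν_smul).comp hg).intervalIntegrable a b
  set x : M := ∫ u in a..b, g u with hx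
  by_cases hx0 : x = 0
  · rw [hx0, nu_zero ν hν_smul]
    exact intervalIntegral.integral_nonneg hab fun u _ => hν_nonneg _
  · -- Hahn-Banach: find a linear functional ℓ ≤ ν with ℓ x = ν x
    have H : ∀ c : ℝ, c • x = 0 → c • (ν x) = 0 := by
      intro c hc
      rcases smul_eq_zero.1 hc with h | h
      · simp [h]
      · exact absurd h hx0
    obtain ⟨ℓ, hℓ1, hℓ2⟩ := exists_extension_of_le_sublinear
      (LinearPMap.mkSpanSingleton' x (ν x) H) ν
      (fun c hc X => by
        rw [real_smul_eq, hν_smul]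
        simp [Complex.norm_real, abs_of_pos hc])
      hν_add
      (fun z => by
        obtain ⟨c, hc⟩ := (Submodule.mem_span_singleton).1
          (by rw [← LinearPMap.domain_mkSpanSingleton (σ := RingHom.id ℝ) x (ν x) H]; exact z.2)
        have hz : z = ⟨c • x, by rw [LinearPMap.domain_mkSpanSingleton]; exact Submodule.smul_mem _ c (Submodule.mem_span_singleton_self x)⟩ := by
          apply Subtype.ext; exact hc.symm
        rw [hz, LinearPMap.mkSpanSingleton'_apply]
        show c • ν x ≤ ν (c • x)
        rw [real_smul_eq c x, hν_smul]
        have h4 : c * ν x ≤ |c| * ν x :=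
          mul_le_mul_of_nonneg_right (le_abs_self c) (hν_nonneg x)
        simpa [Complex.norm_real] using h4)
    have hmem : x ∈ (LinearPMap.mkSpanSingleton' (σ := RingHom.id ℝ) x (ν x) H).domain := by
      rw [LinearPMap.domain_mkSpanSingleton]
      exact Submodule.mem_span_singleton_self x
    have hℓx : ℓ x = ν x := by
      have := hℓ1 ⟨x, hmem⟩
      rw [this]
      exact LinearPMap.mkSpanSingleton'_apply_self (σ := RingHom.id ℝ) x (ν x) H hmem
    have : FiniteDimensional ℝ M := by infer_instance
    set L : M →L[ℝ] ℝ := LinearMap.toContinuousLinearMap ℓ with hL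
    have hLx : L x = ν x := hℓx
    calc ν x = L x := hLx.symm
      _ = ∫ u in a..b, L (g u) := (L.intervalIntegral_comp_comm hint).symm
      _ ≤ ∫ u in a..b, ν (g u) := by
          refine intervalIntegral.integral_mono_on hab ?_ hintν fun u _ => hℓ2 (g u)
          exact (L.continuous.comp hg).intervalIntegrable a b

include hν_nonneg hν_add hν_smul in
lemma mvt (f f' : ℝ → M) (hd : ∀ u, HasDerivAt f (f' u) u) (hc : Continuous f')
    (t : ℝ) (ht : 0 ≤ t) (c : ℝ) (k : ℕ)
    (hb : ∀ u ∈ Set.Icc 0 t, ν (f' u) ≤ c * u ^ k) :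
    ν (f t - f 0) ≤ c * t ^ (k + 1) / (k + 1) := by
  have h1 : (∫ u in (0:ℝ)..t, f' u) = f t - f 0 :=
    intervalIntegral.integral_eq_sub_of_hasDerivAt (fun u _ => hd u)
      (hc.intervalIntegrable 0 t)
  rw [← h1]
  have h2 : ν (∫ u in (0:ℝ)..t, f' u) ≤ ∫ u in (0:ℝ)..t, ν (f' u) :=
    nu_integral_le ν hν_nonneg hν_add hν_smul f' hc 0 t ht
  refine h2.trans ?_
  have h3 : (∫ u in (0:ℝ)..t, ν (f' u)) ≤ ∫ u in (0:ℝ)..t, c * u ^ k := by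
    refine intervalIntegral.integral_mono_on ht
      (((nu_continuous ν hν_nonneg hν_add hν_smul).comp hc).intervalIntegrable 0 t)
      ((continuous_const.mul (continuous_pow k)).intervalIntegrable 0 t)
      fun u hu => hb u hu
  refine h3.trans (le_of_eq ?_)
  rw [intervalIntegral.integral_const_mul, integral_pow]
  rw [mul_div_assoc]
  norm_num

end Seminorm

lemma conj_hasDerivAt (Y Y' Z : M) (hY' : Y' = -Y) (u : ℝ) :
    HasDerivAt (fun v : ℝ => exp (v • Y) * Z * exp (v • Y'))
      (exp (u • Y) * (Y * Z - Z * Y) * exp (u • Y')) u := by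
  subst hY'
  have h1 := (eexp_hasDerivAt Y u).mul_const Z
  have h2 := h1.mul (eexp_hasDerivAt (-Y) u)
  have h2' : HasDerivAt (fun v : ℝ => exp (v • Y) * Z * exp (v • -Y))
      (exp (u • Y) * Y * Z * exp (u • -Y) + exp (u • Y) * Z * (exp (u • -Y) * -Y)) u := h2
  convert h2' using 1
  have hcomm : exp (u • -Y) * -Y = -Y * exp (u • -Y) :=
    (((Commute.refl (-Y)).smul_right u).exp_right).symm.eq
  rw [hcomm]
  simp only [mul_sub, sub_mul, mul_add, add_mul, mul_assoc, mul_neg, neg_mul]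
  abel

lemma conj_continuous (Y Y' Z : M) :
    Continuous (fun v : ℝ => exp (v • Y) * Z * exp (v • Y')) :=
  ((eexp_continuous Y).mul continuous_const).mul (eexp_continuous Y')

section Ord

variable (ν : Matrix n n ℂ → ℝ)
  (hν_nonneg : ∀ X, 0 ≤ ν X)
  (hν_add : ∀ X Y, ν (X + Y) ≤ ν X + ν Y)
  (hν_smul : ∀ (c : ℂ) X, ν (c • X) = ‖c‖ * ν X)
  (hν_ui : ∀ (U V X : Matrix n n ℂ), U ∈ Matrix.unitaryGroup n ℂ →
      V ∈ Matrix.unitaryGroup n ℂ → ν (U * X * V) = ν X)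

include hν_nonneg hν_add hν_smul hν_ui in
lemma ord1 (Y Y' Z : M) (hY' : Y' = -Y) (hY : Yᴴ = -Y) (t : ℝ) (ht : 0 ≤ t) :
    ν (exp (t • Y) * Z * exp (t • Y') - Z) ≤ ν (Y * Z - Z * Y) * t := by
  have hY'skew : Y'ᴴ = -Y' := by rw [hY']; simp [hY]
  have key := mvt ν hν_nonneg hν_add hν_smul
    (fun v => exp (v • Y) * Z * exp (v • Y'))
    (fun v => exp (v • Y) * (Y * Z - Z * Y) * exp (v • Y'))
    (fun u => conj_hasDerivAt Y Y' Z hY' u)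
    (conj_continuous Y Y' _) t ht (ν (Y * Z - Z * Y)) 0
    (fun u _ => by
      rw [hν_ui _ _ _ (exp_mem_unitary hY u) (exp_mem_unitary hY'skew u)]
      simp)
  norm_num at key
  exact key

include hν_nonneg hν_add hν_smul hν_ui in
lemma ord2 (Y Y' Z : M) (hY' : Y' = -Y) (hY : Yᴴ = -Y) (t : ℝ) (ht : 0 ≤ t) :
    ν (exp (t • Y) * Z * exp (t • Y') - Z - t • (Y * Z - Z * Y))
      ≤ ν (Y * (Y * Z - Z * Y) - (Y * Z - Z * Y) * Y) * t ^ 2 / 2 := by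
  set W : M := Y * Z - Z * Y with hW
  have hd : ∀ u : ℝ, HasDerivAt
      (fun v : ℝ => exp (v • Y) * Z * exp (v • Y') - Z - v • W)
      (exp (u • Y) * W * exp (u • Y') - W) u := by
    intro u
    have h1 := (conj_hasDerivAt Y Y' Z hY' u).sub_const Z
    have h2 : HasDerivAt (fun v : ℝ => v • W) W u := by
      exact ((hasDerivAt_id u).smul_const W).congr_deriv (one_smul ℝ W)
    exact h1.sub h2
  have hcont : Continuous fun u : ℝ => exp (u • Y) * W * exp (u • Y') - W :=
    (conj_continuous Y Y' W).sub continuous_const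
  have key := mvt ν hν_nonneg hν_add hν_smul _ _ hd hcont t ht
    (ν (Y * W - W * Y)) 1
    (fun u hu => by
      have h3 := ord1 ν hν_nonneg hν_add hν_smul hν_ui Y Y' W hY' hY u hu.1
      calc ν (exp (u • Y) * W * exp (u • Y') - W) ≤ ν (Y * W - W * Y) * u := h3
        _ = ν (Y * W - W * Y) * u ^ 1 := by rw [pow_one])
  simp only [zero_smul, exp_zero, one_mul, mul_one, sub_self, sub_zero] at key
  norm_num at key
  exact key

end Ord

lemma sq_hasDerivAt (u : ℝ) : HasDerivAt (fun v : ℝ => v ^ 2) (2 * u) u := by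
  simpa using hasDerivAt_pow 2 u

noncomputable def pm (B : Matrix n n ℂ) (u : ℝ) : Matrix n n ℂ :=
  exp (u • (-(Complex.I • B)))

noncomputable def pp (B : Matrix n n ℂ) (u : ℝ) : Matrix n n ℂ :=
  exp (u • (Complex.I • B))

noncomputable def Nc (A B : Matrix n n ℂ) : Matrix n n ℂ := A * B - B * A

noncomputable def Ff (A B : Matrix n n ℂ) (u : ℝ) : Matrix n n ℂ :=
  pm B u * pm A u * pp B u * pp A u

noncomputable def Gg (A B : Matrix n n ℂ) (u : ℝ) : Matrix n n ℂ :=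
  exp ((u ^ 2) • (-(Nc A B)))

noncomputable def Lam (A B : Matrix n n ℂ) (u : ℝ) : Matrix n n ℂ :=
  u • (pm B u * Nc A B * pp B u - Nc A B)
  + u • (pm B u * (pm A u * Nc A B * pp A u) * pp B u - Nc A B)
  + Complex.I • (pm B u * (pm A u * B * pp A u - B + (Complex.I * u) • Nc A B) * pp B u)
  + Complex.I • (pm B u * (pm A u * (pp B u * A * pm B u - A + (Complex.I * u) • Nc A B) * pp A u) * pp B u)

lemma pm_pp (B : Matrix n n ℂ) (u : ℝ) : pm B u * pp B u = 1 := by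
  have := eexp_mul_eexp_neg (-(Complex.I • B)) u
  simpa [pm, pp] using this

lemma pp_pm (B : Matrix n n ℂ) (u : ℝ) : pp B u * pm B u = 1 := by
  have := eexp_mul_eexp_neg (Complex.I • B) u
  simpa [pm, pp] using this

lemma comm_pm (B : Matrix n n ℂ) (u : ℝ) : B * pm B u = pm B u * B := by
  exact ((((Commute.refl B).smul_right Complex.I).neg_right.smul_right u).exp_right).eq

lemma comm_pp (B : Matrix n n ℂ) (u : ℝ) : B * pp B u = pp B u * B := by
  exact ((((Commute.refl B).smul_right Complex.I).smul_right u).exp_right).eq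

lemma main_id (A B : Matrix n n ℂ) (u : ℝ) :
    Gg A B u * (Lam A B u * Ff A B u)
    = (2 * u) • (Gg A B u * (-(Nc A B))) * Ff A B u
      + Gg A B u *
        (((pm B u * -(Complex.I • B) * pm A u + pm B u * (pm A u * -(Complex.I • A))) * pp B u
          + pm B u * pm A u * (pp B u * (Complex.I • B))) * pp A u
        + pm B u * pm A u * pp B u * (pp A u * (Complex.I • A))) := by
  have cBmp : ∀ X : Matrix n n ℂ, pm B u * (pp B u * X) = X := fun X => by
    rw [← mul_assoc, pm_pp, one_mul]
  have cBpm : ∀ X : Matrix n n ℂ, pp B u * (pm B u * X) = X := fun X => by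
    rw [← mul_assoc, pp_pm, one_mul]
  have cAmp : ∀ X : Matrix n n ℂ, pm A u * (pp A u * X) = X := fun X => by
    rw [← mul_assoc, pm_pp, one_mul]
  have cApm : ∀ X : Matrix n n ℂ, pp A u * (pm A u * X) = X := fun X => by
    rw [← mul_assoc, pp_pm, one_mul]
  have mBm : ∀ X : Matrix n n ℂ, B * (pm B u * X) = pm B u * (B * X) := fun X => by
    rw [← mul_assoc, comm_pm, mul_assoc]
  have mBp : ∀ X : Matrix n n ℂ, B * (pp B u * X) = pp B u * (B * X) := fun X => by
    rw [← mul_assoc, comm_pp, mul_assoc]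
  have mAm : ∀ X : Matrix n n ℂ, A * (pm A u * X) = pm A u * (A * X) := fun X => by
    rw [← mul_assoc, comm_pm, mul_assoc]
  have mAp : ∀ X : Matrix n n ℂ, A * (pp A u * X) = pp A u * (A * X) := fun X => by
    rw [← mul_assoc, comm_pp, mul_assoc]
  have hz : Complex.I * (Complex.I * (u : ℂ)) = -(u : ℂ) := by
    rw [← mul_assoc, Complex.I_mul_I, neg_one_mul]
  simp only [Lam, Ff, Nc, mul_add, add_mul, mul_sub, sub_mul, smul_mul_assoc, mul_smul_comm,
    mul_assoc, smul_smul, smul_add, smul_sub, neg_mul, mul_neg, neg_smul, smul_neg,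
    one_mul, mul_one, cBmp, cBpm, cAmp, cApm, pm_pp, pp_pm,
    comm_pm, comm_pp, mBm, mBp, mAm, mAp,
    real_smul_eq, Complex.ofReal_mul, Complex.ofReal_ofNat, hz]
  module

lemma main_deriv (A B : Matrix n n ℂ) (u : ℝ) :
    HasDerivAt (fun v : ℝ => Gg A B v * Ff A B v)
      (Gg A B u * (Lam A B u * Ff A B u)) u := by
  have hG : HasDerivAt (fun v : ℝ => Gg A B v)
      ((2 * u) • (Gg A B u * (-(Nc A B)))) u :=
    by have h := (eexp_hasDerivAt (-(Nc A B)) (u ^ 2)).scomp u (sq_hasDerivAt u); exact h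
  have h1 := eexp_hasDerivAt (-(Complex.I • B)) u
  have h2 := eexp_hasDerivAt (-(Complex.I • A)) u
  have h3 := eexp_hasDerivAt (Complex.I • B) u
  have h4 := eexp_hasDerivAt (Complex.I • A) u
  have hF : HasDerivAt (fun v : ℝ => Ff A B v)
      (((pm B u * -(Complex.I • B) * pm A u + pm B u * (pm A u * -(Complex.I • A))) * pp B u
          + pm B u * pm A u * (pp B u * (Complex.I • B))) * pp A u
        + pm B u * pm A u * pp B u * (pp A u * (Complex.I • A))) u := by
    have h12 := h1.mul h2
    have h123 := h12.mul h3
    have h1234 := h123.mul h4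
    exact h1234
  have hE := hG.mul hF
  exact hE.congr_deriv (main_id A B u).symm


lemma aux_addform (X Y : Matrix n n ℂ) (u : ℝ) :
    X - u • -(Complex.I • Y) = X + (Complex.I * (u : ℂ)) • Y := by
  rw [smul_neg, sub_neg_eq_add, real_smul_eq, smul_smul, mul_comm (u : ℂ) Complex.I]

section Bound

variable (ν : Matrix n n ℂ → ℝ)
  (hν_nonneg : ∀ X, 0 ≤ ν X)
  (hν_add : ∀ X Y, ν (X + Y) ≤ ν X + ν Y)
  (hν_smul : ∀ (c : ℂ) X, ν (c • X) = ‖c‖ * ν X)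
  (hν_ui : ∀ (U V X : Matrix n n ℂ), U ∈ Matrix.unitaryGroup n ℂ →
      V ∈ Matrix.unitaryGroup n ℂ → ν (U * X * V) = ν X)

include hν_add hν_smul in
lemma nu_add4 (a b c d : Matrix n n ℂ) :
    ν (a + b + c + d) ≤ ν a + ν b + ν c + ν d := by
  have h1 := hν_add (a + b + c) d
  have h2 := hν_add (a + b) c
  have h3 := hν_add a b
  linarith

include hν_nonneg hν_add hν_smul hν_ui in
lemma bound_Lam (A B : Matrix n n ℂ) (hA : A.IsHermitian) (hB : B.IsHermitian)
    (u : ℝ) (hu : 0 ≤ u) :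
    ν (Lam A B u) ≤ ((3/2) * ν (A * (A*B - B*A) - (A*B - B*A) * A)
        + (5/2) * ν (B * (B*A - A*B) - (B*A - A*B) * B)) * u ^ 2 := by
  set KA : Matrix n n ℂ := A * (A*B - B*A) - (A*B - B*A) * A with hKA
  set KB : Matrix n n ℂ := B * (B*A - A*B) - (B*A - A*B) * B with hKB
  -- skew-adjointness
  have hIB : (Complex.I • B)ᴴ = -(Complex.I • B) := by
    rw [Matrix.conjTranspose_smul, hB.eq]
    simp [Complex.star_def, Complex.conj_I, neg_smul]
  have hIA : (Complex.I • A)ᴴ = -(Complex.I • A) := by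
    rw [Matrix.conjTranspose_smul, hA.eq]
    simp [Complex.star_def, Complex.conj_I, neg_smul]
  have hmB : (-(Complex.I • B))ᴴ = -(-(Complex.I • B)) := by rw [Matrix.conjTranspose_neg, hIB]
  have hmA : (-(Complex.I • A))ᴴ = -(-(Complex.I • A)) := by rw [Matrix.conjTranspose_neg, hIA]
  have uBm := exp_mem_unitary hmB u
  have uBp := exp_mem_unitary hIB u
  have uAm := exp_mem_unitary hmA u
  have uAp := exp_mem_unitary hIA u
  -- commutator identities
  have idB : (-(Complex.I • B)) * Nc A B - Nc A B * (-(Complex.I • B)) = Complex.I • KB := by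
    simp only [hKB, Nc, mul_sub, sub_mul, mul_neg, neg_mul, smul_mul_assoc, mul_smul_comm,
      smul_smul, Complex.I_mul_I, neg_smul, one_smul, smul_sub, smul_neg, neg_neg]
    module
  have idA : (-(Complex.I • A)) * Nc A B - Nc A B * (-(Complex.I • A)) = -(Complex.I • KA) := by
    simp only [hKA, Nc, mul_sub, sub_mul, mul_neg, neg_mul, smul_mul_assoc, mul_smul_comm,
      smul_smul, Complex.I_mul_I, neg_smul, one_smul, smul_sub, smul_neg, neg_neg]
    module
  have idb : (-(Complex.I • A)) * B - B * (-(Complex.I • A)) = -(Complex.I • Nc A B) := by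
    simp only [Nc, mul_sub, sub_mul, mul_neg, neg_mul, smul_mul_assoc, mul_smul_comm,
      smul_smul, Complex.I_mul_I, neg_smul, one_smul, smul_sub, smul_neg, neg_neg]
    module
  have idc : (Complex.I • B) * A - A * (Complex.I • B) = -(Complex.I • Nc A B) := by
    simp only [Nc, mul_sub, sub_mul, mul_neg, neg_mul, smul_mul_assoc, mul_smul_comm,
      smul_smul, Complex.I_mul_I, neg_smul, one_smul, smul_sub, smul_neg, neg_neg]
    module
  have iddblA : (-(Complex.I • A)) * -(Complex.I • Nc A B)
      - -(Complex.I • Nc A B) * (-(Complex.I • A)) = -KA := by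
    simp only [hKA, Nc, mul_sub, sub_mul, mul_neg, neg_mul, smul_mul_assoc, mul_smul_comm,
      smul_smul, Complex.I_mul_I, neg_smul, one_smul, smul_sub, smul_neg, neg_neg]
    module
  have iddblB : (Complex.I • B) * -(Complex.I • Nc A B)
      - -(Complex.I • Nc A B) * (Complex.I • B) = -KB := by
    simp only [hKB, Nc, mul_sub, sub_mul, mul_neg, neg_mul, smul_mul_assoc, mul_smul_comm,
      smul_smul, Complex.I_mul_I, neg_smul, one_smul, smul_sub, smul_neg, neg_neg]
    module
  -- piece 1
  have p1 := ord1 ν hν_nonneg hν_add hν_smul hν_ui (-(Complex.I • B)) (Complex.I • B)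
    (Nc A B) (neg_neg _).symm hmB u hu
  rw [idB, hν_smul, Complex.norm_I, one_mul] at p1
  -- piece 2
  have p2 := ord1 ν hν_nonneg hν_add hν_smul hν_ui (-(Complex.I • A)) (Complex.I • A)
    (Nc A B) (neg_neg _).symm hmA u hu
  rw [idA, nu_neg ν hν_smul, hν_smul, Complex.norm_I, one_mul] at p2
  -- piece 2'
  have split : exp (u • -(Complex.I • B)) * (exp (u • -(Complex.I • A)) * Nc A B
        * exp (u • (Complex.I • A))) * exp (u • (Complex.I • B)) - Nc A B
      = exp (u • -(Complex.I • B)) * (exp (u • -(Complex.I • A)) * Nc A B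
        * exp (u • (Complex.I • A)) - Nc A B) * exp (u • (Complex.I • B))
        + (exp (u • -(Complex.I • B)) * Nc A B * exp (u • (Complex.I • B)) - Nc A B) := by
    noncomm_ring
  have p2' : ν (exp (u • -(Complex.I • B)) * (exp (u • -(Complex.I • A)) * Nc A B
        * exp (u • (Complex.I • A))) * exp (u • (Complex.I • B)) - Nc A B)
      ≤ ν KA * u + ν KB * u := by
    rw [split]
    refine (hν_add _ _).trans ?_
    rw [hν_ui _ _ _ uBm uBp]
    exact add_le_add p2 p1
  -- piece 3 (Rb)
  have p3 := ord2 ν hν_nonneg hν_add hν_smul hν_ui (-(Complex.I • A)) (Complex.I • A)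
    B (neg_neg _).symm hmA u hu
  rw [idb] at p3
  rw [iddblA, nu_neg ν hν_smul] at p3
  rw [aux_addform] at p3
  -- piece 4 (Rc)
  have p4 := ord2 ν hν_nonneg hν_add hν_smul hν_ui (Complex.I • B) (-(Complex.I • B))
    A rfl hIB u hu
  rw [idc] at p4
  rw [iddblB, nu_neg ν hν_smul] at p4
  rw [aux_addform] at p4
  -- assemble
  simp only [Lam, pm, pp]
  refine (nu_add4 ν hν_add hν_smul _ _ _ _).trans ?_
  have e1 : ν (u • (exp (u • -(Complex.I • B)) * Nc A B * exp (u • (Complex.I • B)) - Nc A B))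
      = u * ν (exp (u • -(Complex.I • B)) * Nc A B * exp (u • (Complex.I • B)) - Nc A B) := by
    rw [real_smul_eq, hν_smul, Complex.norm_real, Real.norm_of_nonneg hu]
  have e2 : ν (u • (exp (u • -(Complex.I • B)) * (exp (u • -(Complex.I • A)) * Nc A B
        * exp (u • (Complex.I • A))) * exp (u • (Complex.I • B)) - Nc A B))
      = u * ν (exp (u • -(Complex.I • B)) * (exp (u • -(Complex.I • A)) * Nc A B
        * exp (u • (Complex.I • A))) * exp (u • (Complex.I • B)) - Nc A B) := by
    rw [real_smul_eq, hν_smul, Complex.norm_real, Real.norm_of_nonneg hu]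
  have e3 : ν (Complex.I • (exp (u • -(Complex.I • B)) * (exp (u • -(Complex.I • A)) * B
        * exp (u • (Complex.I • A)) - B + (Complex.I * (u : ℂ)) • Nc A B)
        * exp (u • (Complex.I • B))))
      = ν (exp (u • -(Complex.I • A)) * B * exp (u • (Complex.I • A)) - B
        + (Complex.I * (u : ℂ)) • Nc A B) := by
    rw [hν_smul, Complex.norm_I, one_mul, hν_ui _ _ _ uBm uBp]
  have e4 : ν (Complex.I • (exp (u • -(Complex.I • B)) * (exp (u • -(Complex.I • A))
        * (exp (u • (Complex.I • B)) * A * exp (u • -(Complex.I • B)) - A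
          + (Complex.I * (u : ℂ)) • Nc A B) * exp (u • (Complex.I • A)))
        * exp (u • (Complex.I • B))))
      = ν (exp (u • (Complex.I • B)) * A * exp (u • -(Complex.I • B)) - A
        + (Complex.I * (u : ℂ)) • Nc A B) := by
    rw [hν_smul, Complex.norm_I, one_mul, hν_ui _ _ _ uBm uBp, hν_ui _ _ _ uAm uAp]
  rw [e1, e2, e3, e4]
  have hKAn := hν_nonneg KA
  have hKBn := hν_nonneg KB
  nlinarith [mul_le_mul_of_nonneg_left p1 hu, mul_le_mul_of_nonneg_left p2' hu, p3, p4, sq_nonneg u]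

include hν_nonneg hν_add hν_smul hν_ui in
theorem main (A B : Matrix n n ℂ) (hA : A.IsHermitian) (hB : B.IsHermitian)
    (s : ℝ) (hs : 0 < s) :
    ν (exp (-(Complex.I * Real.sqrt s) • B)
        * exp (-(Complex.I * Real.sqrt s) • A)
        * exp ((Complex.I * Real.sqrt s) • B)
        * exp ((Complex.I * Real.sqrt s) • A)
        - exp ((s : ℂ) • (A * B - B * A)))
      ≤ s ^ ((3 : ℝ) / 2) *
        (ν (A * (A * B - B * A) - (A * B - B * A) * A)
          + ν (B * (B * A - A * B) - (B * A - A * B) * B)) := by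
  set t := Real.sqrt s with hts
  have ht0 : 0 ≤ t := Real.sqrt_nonneg s
  set KA : Matrix n n ℂ := A * (A*B - B*A) - (A*B - B*A) * A with hKA
  set KB : Matrix n n ℂ := B * (B*A - A*B) - (B*A - A*B) * B with hKB
  -- skewness
  have hIB : (Complex.I • B)ᴴ = -(Complex.I • B) := by
    rw [Matrix.conjTranspose_smul, hB.eq]
    simp [Complex.star_def, Complex.conj_I, neg_smul]
  have hIA : (Complex.I • A)ᴴ = -(Complex.I • A) := by
    rw [Matrix.conjTranspose_smul, hA.eq]
    simp [Complex.star_def, Complex.conj_I, neg_smul]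
  have hmB : (-(Complex.I • B))ᴴ = -(-(Complex.I • B)) := by rw [Matrix.conjTranspose_neg, hIB]
  have hmA : (-(Complex.I • A))ᴴ = -(-(Complex.I • A)) := by rw [Matrix.conjTranspose_neg, hIA]
  have hNc : (Nc A B)ᴴ = -(Nc A B) := by
    simp only [Nc, Matrix.conjTranspose_sub, Matrix.conjTranspose_mul, hA.eq, hB.eq]
    exact (neg_sub _ _).symm
  have hNcm : (-(Nc A B))ᴴ = -(-(Nc A B)) := by rw [Matrix.conjTranspose_neg, hNc]
  -- unitarity
  have uG : ∀ u : ℝ, Gg A B u ∈ Matrix.unitaryGroup n ℂ := fun u =>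
    exp_mem_unitary hNcm (u ^ 2)
  have uF : ∀ u : ℝ, Ff A B u ∈ Matrix.unitaryGroup n ℂ := fun u =>
    mul_mem (mul_mem (mul_mem (exp_mem_unitary hmB u) (exp_mem_unitary hmA u))
      (exp_mem_unitary hIB u)) (exp_mem_unitary hIA u)
  -- continuity of the derivative
  have cpmB : Continuous (pm B) := eexp_continuous _
  have cpmA : Continuous (pm A) := eexp_continuous _
  have cppB : Continuous (pp B) := eexp_continuous _
  have cppA : Continuous (pp A) := eexp_continuous _
  have cGg : Continuous (Gg A B) :=
    exp_continuous.comp ((continuous_pow 2).smul continuous_const)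
  have cFf : Continuous (Ff A B) := ((cpmB.mul cpmA).mul cppB).mul cppA
  have cIu : Continuous fun u : ℝ => (Complex.I * (u : ℂ)) • Nc A B :=
    (continuous_const.mul Complex.continuous_ofReal).smul continuous_const
  have cLam : Continuous (Lam A B) := by
    apply Continuous.add
    apply Continuous.add
    apply Continuous.add
    · exact continuous_id.smul (((cpmB.mul continuous_const).mul cppB).sub continuous_const)
    · exact continuous_id.smul
        ((cpmB.mul (((cpmA.mul continuous_const).mul cppA))).mul cppB |>.sub continuous_const)
    · exact (((cpmB.mul ((((cpmA.mul continuous_const).mul cppA).sub continuous_const).add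
        cIu)).mul cppB)).const_smul Complex.I
    · exact (((cpmB.mul ((cpmA.mul ((((cppB.mul continuous_const).mul cpmB).sub
        continuous_const).add cIu)).mul cppA)).mul cppB)).const_smul Complex.I
  have cD : Continuous fun u : ℝ => Gg A B u * (Lam A B u * Ff A B u) :=
    cGg.mul (cLam.mul cFf)
  -- the derivative bound
  set c : ℝ := (3/2) * ν KA + (5/2) * ν KB with hc
  have hb : ∀ u ∈ Set.Icc (0:ℝ) t, ν (Gg A B u * (Lam A B u * Ff A B u)) ≤ c * u ^ 2 := by
    intro u hu
    rw [← mul_assoc, hν_ui _ _ _ (uG u) (uF u)]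
    calc ν (Lam A B u) ≤ ((3/2) * ν KA + (5/2) * ν KB) * u ^ 2 :=
          bound_Lam ν hν_nonneg hν_add hν_smul hν_ui A B hA hB u hu.1
      _ = c * u ^ 2 := by rw [hc]
  have key := mvt ν hν_nonneg hν_add hν_smul (fun u => Gg A B u * Ff A B u)
    (fun u => Gg A B u * (Lam A B u * Ff A B u)) (main_deriv A B) cD t ht0 c 2 hb
  norm_num at key
  -- initial value
  have hE0 : Gg A B 0 * Ff A B 0 = 1 := by
    norm_num [Gg, Ff, pm, pp, exp_zero]
  rw [hE0] at key
  -- rewrite the statement's matrices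
  have hm1 : exp ((-(Complex.I * (t : ℝ))) • B) = pm B t := by
    rw [pm]
    congr 1
    rw [real_smul_eq, smul_neg, smul_smul, ← neg_smul, mul_comm]
  have hm2 : exp ((-(Complex.I * (t : ℝ))) • A) = pm A t := by
    rw [pm]
    congr 1
    rw [real_smul_eq, smul_neg, smul_smul, ← neg_smul, mul_comm]
  have hm3 : exp (((Complex.I * (t : ℝ))) • B) = pp B t := by
    rw [pp]
    congr 1
    rw [real_smul_eq, smul_smul, mul_comm]
  have hm4 : exp (((Complex.I * (t : ℝ))) • A) = pp A t := by
    rw [pp]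
    congr 1
    rw [real_smul_eq, smul_smul, mul_comm]
  have hm5 : exp ((s : ℂ) • (A * B - B * A)) = exp ((t ^ 2 : ℝ) • Nc A B) := by
    rw [Nc]
    congr 1
    rw [real_smul_eq]
    congr 1
    rw [Real.sq_sqrt hs.le]
  rw [hm1, hm2, hm3, hm4, hm5]
  have hsub : pm B t * pm A t * pp B t * pp A t - exp ((t ^ 2 : ℝ) • Nc A B)
      = exp ((t ^ 2 : ℝ) • Nc A B) * (Gg A B t * Ff A B t - 1) * 1 := by
    rw [mul_one, mul_sub, mul_one, Gg, ← mul_assoc,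
      eexp_mul_eexp_neg (Nc A B) (t ^ 2), one_mul, Ff]
  rw [hsub, hν_ui _ _ _ (exp_mem_unitary hNc (t ^ 2)) (one_mem _)]
  -- conclude
  have htpow : s ^ ((3 : ℝ) / 2) = t ^ 3 := by
    rw [hts, Real.sqrt_eq_rpow, ← Real.rpow_natCast (s ^ ((1:ℝ)/2)) 3, ← Real.rpow_mul hs.le]
    norm_num
  have hKAn := hν_nonneg KA
  have hKBn := hν_nonneg KB
  have ht3 : (0:ℝ) ≤ t ^ 3 := pow_nonneg ht0 3
  calc ν (Gg A B t * Ff A B t - 1) ≤ c * t ^ 3 / 3 := key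
    _ ≤ (ν KA + ν KB) * t ^ 3 := by rw [hc]; nlinarith
    _ = s ^ ((3 : ℝ) / 2) * (ν KA + ν KB) := by rw [htpow]; ring

end Bound

end GCB

/-- Group commutator approximation: for Hermitian `A, B` on a finite-dimensional
Hilbert space, `s > 0`, and any unitarily invariant norm `ν`,
`ν(e^{-i√s B} e^{-i√s A} e^{i√s B} e^{i√s A} - e^{s[A,B]})
  ≤ s^{3/2} (ν([A,[A,B]]) + ν([B,[B,A]]))`. -/
theorem group_commutator_bound {n : Type*} [Fintype n] [DecidableEq n]
    (A B : Matrix n n ℂ) (hA : A.IsHermitian) (hB : B.IsHermitian)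
    (s : ℝ) (hs : 0 < s)
    (ν : Matrix n n ℂ → ℝ)
    (hν_nonneg : ∀ X, 0 ≤ ν X)
    (hν_add : ∀ X Y, ν (X + Y) ≤ ν X + ν Y)
    (hν_smul : ∀ (c : ℂ) X, ν (c • X) = ‖c‖ * ν X)
    (hν_ui : ∀ (U V X : Matrix n n ℂ), U ∈ Matrix.unitaryGroup n ℂ →
      V ∈ Matrix.unitaryGroup n ℂ → ν (U * X * V) = ν X) :
    ν (NormedSpace.exp (-(Complex.I * Real.sqrt s) • B)
        * NormedSpace.exp (-(Complex.I * Real.sqrt s) • A)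
        * NormedSpace.exp ((Complex.I * Real.sqrt s) • B)
        * NormedSpace.exp ((Complex.I * Real.sqrt s) • A)
        - NormedSpace.exp ((s : ℂ) • (A * B - B * A)))
      ≤ s ^ ((3 : ℝ) / 2) *
        (ν (A * (A * B - B * A) - (A * B - B * A) * A)
          + ν (B * (B * A - A * B) - (B * A - A * B) * B)) :=
  GCB.main ν hν_nonneg hν_add hν_smul hν_ui A B hA hB s hs

end GCBHelpers
end

section
/- Fix ε > 0 small. The larger solution x₂ ∈ (0,1) of the equation h(x) + ε = x, where h(x) = sech((2L+1)·arcsech(x)), satisfies x₂ = 1 - ε/(4(L²+L)) + O(ε²). -/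
namespace LFPE

lemma sinh_nonneg {x : ℝ} (hx : 0 ≤ x) : 0 ≤ Real.sinh x :=
  le_trans hx (Real.self_le_sinh_iff.mpr hx)

lemma cosh_eq_one_add (t : ℝ) : Real.cosh t = 1 + 2 * Real.sinh (t/2) ^ 2 := by
  have h := Real.cosh_two_mul (t/2)
  have h2 := Real.cosh_sq' (t/2)
  rw [show 2*(t/2) = t by ring] at h
  linarith

lemma cosh_ge_quad {t : ℝ} (ht : 0 ≤ t) : 1 + t^2/2 ≤ Real.cosh t := by
  rw [cosh_eq_one_add]
  have h1 : t/2 ≤ Real.sinh (t/2) := Real.self_le_sinh_iff.mpr (by linarith)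
  nlinarith [sinh_nonneg (show (0:ℝ) ≤ t/2 by linarith)]

lemma sinh_le_mul_cosh {x : ℝ} (hx : 0 ≤ x) : Real.sinh x ≤ x * Real.cosh x := by
  have key : MonotoneOn (fun y : ℝ => y * Real.cosh y - Real.sinh y) (Set.Ici 0) := by
    have hderiv : ∀ y : ℝ, HasDerivAt (fun y : ℝ => y * Real.cosh y - Real.sinh y)
        (y * Real.sinh y) y := by
      intro y
      have h := ((hasDerivAt_id y).mul (Real.hasDerivAt_cosh y)).sub (Real.hasDerivAt_sinh y)
      refine h.congr_deriv ?_
      simp only [id_eq]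
      ring
    apply monotoneOn_of_deriv_nonneg (convex_Ici 0)
    · exact (Continuous.continuousOn (by continuity))
    · intro y _; exact (hderiv y).differentiableAt.differentiableWithinAt
    · intro y hy
      rw [interior_Ici] at hy
      rw [(hderiv y).deriv]
      exact mul_nonneg (le_of_lt hy) (sinh_nonneg (le_of_lt hy))
  have h0 := key (Set.self_mem_Ici) (Set.mem_Ici.mpr hx) hx
  simp only [Real.cosh_zero, Real.sinh_zero, mul_one, zero_mul, sub_zero, zero_sub, neg_zero]
    at h0
  linarith

lemma cosh_le_quad {t : ℝ} (ht : 0 ≤ t) (ht1 : t ≤ 1) :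
    Real.cosh t ≤ 1 + t^2/2 + t^4/6 := by
  have h1 := cosh_eq_one_add t
  have h2 : Real.sinh (t/2) ≤ (t/2) * Real.cosh (t/2) := sinh_le_mul_cosh (by linarith)
  have h3 : Real.cosh (t/2) ^ 2 = (Real.cosh t + 1) / 2 := by
    have h := Real.cosh_two_mul (t/2)
    have h2' := Real.cosh_sq' (t/2)
    rw [show 2*(t/2) = t by ring] at h
    linarith
  have h4 : 0 ≤ Real.sinh (t/2) := sinh_nonneg (by linarith)
  have h5 : Real.sinh (t/2) ^ 2 ≤ (t/2)^2 * ((Real.cosh t + 1)/2) := by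
    calc Real.sinh (t/2) ^ 2 ≤ ((t/2) * Real.cosh (t/2))^2 := by
          apply sq_le_sq' <;> nlinarith [Real.cosh_pos (t/2)]
      _ = (t/2)^2 * ((Real.cosh t + 1)/2) := by rw [mul_pow, h3]
  have hc1 := Real.one_le_cosh t
  have hc4 : (0:ℝ) < 1 - t^2/4 := by nlinarith
  have key : Real.cosh t * (1 - t^2/4) ≤ 1 + t^2/4 := by nlinarith
  nlinarith [key, hc4, mul_nonneg (pow_nonneg ht 4) (sub_nonneg.mpr (show t^2 ≤ 1 by nlinarith))]

lemma sech_quad {t : ℝ} (ht : 0 ≤ t) (ht1 : t ≤ 1) :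
    |1/Real.cosh t - (1 - t^2/2)| ≤ t^4 := by
  have hc := Real.cosh_pos t
  have hl := cosh_ge_quad ht
  have hu := cosh_le_quad ht ht1
  have h1 : (1 - t^2/2 - t^4) * Real.cosh t ≤ 1 := by
    rcases le_or_gt (1 - t^2/2 - t^4) 0 with h | h
    · nlinarith
    · nlinarith [mul_le_mul_of_nonneg_left hu h.le]
  have h2 : (1:ℝ) ≤ (1 - t^2/2 + t^4) * Real.cosh t := by
    have hf : (0:ℝ) ≤ 1 - t^2/2 + t^4 := by nlinarith
    nlinarith [mul_le_mul_of_nonneg_left hl hf]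
  rw [abs_le]
  constructor
  · have := (le_div_iff₀ hc).mpr h1
    linarith
  · have := (div_le_iff₀ hc).mpr h2
    linarith

lemma arcosh_cosh {t : ℝ} (ht : 0 ≤ t) : arcosh (Real.cosh t) = t := by
  unfold arcosh
  have h1 : Real.cosh t ^ 2 - 1 = Real.sinh t ^ 2 := by
    have := Real.cosh_sq t; linarith
  rw [h1, Real.sqrt_sq (sinh_nonneg ht), Real.cosh_add_sinh, Real.log_exp]

lemma cosh_arcosh {x : ℝ} (hx : 1 ≤ x) : Real.cosh (arcosh x) = x := by
  unfold arcosh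
  have hx0 : 0 < x := by linarith
  have hnn : (0:ℝ) ≤ x^2 - 1 := by nlinarith
  have hs : Real.sqrt (x^2-1) ^ 2 = x^2 - 1 := Real.sq_sqrt hnn
  set s := Real.sqrt (x^2-1) with hs'
  have hs0 : 0 ≤ s := Real.sqrt_nonneg _
  have hxs : 0 < x + s := by linarith
  have hmul : (x+s)*(x-s) = 1 := by nlinarith
  have hinv : (x+s)⁻¹ = x - s := inv_eq_of_mul_eq_one_right hmul
  rw [Real.cosh_eq, Real.exp_log hxs, Real.exp_neg, Real.exp_log hxs, hinv]
  ring

lemma arcsech_sech {t : ℝ} (ht : 0 ≤ t) : arcsech (1/Real.cosh t) = t := by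
  unfold arcsech
  rw [one_div_one_div]
  exact arcosh_cosh ht

lemma sech_arcsech {y : ℝ} (h0 : 0 < y) (h1 : y < 1) : 1/Real.cosh (arcsech y) = y := by
  unfold arcsech
  rw [cosh_arcosh (one_le_one_div h0 h1.le), one_div_one_div]

lemma arcsech_pos {y : ℝ} (h0 : 0 < y) (h1 : y < 1) : 0 < arcsech y := by
  unfold arcsech arcosh
  apply Real.log_pos
  have h2 : 1 < 1/y := one_lt_one_div h0 h1
  have h3 := Real.sqrt_nonneg ((1/y)^2 - 1)
  linarith

lemma cosh_le_exp {x : ℝ} (hx : 0 ≤ x) : Real.cosh x ≤ Real.exp x := by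
  rw [Real.cosh_eq]
  have : Real.exp (-x) ≤ Real.exp x := Real.exp_le_exp.mpr (by linarith)
  linarith

lemma hasDerivAt_phi (a t : ℝ) :
    HasDerivAt (fun t => 1/Real.cosh t - 1/Real.cosh (a*t))
      (a * Real.sinh (a*t)/Real.cosh (a*t)^2 - Real.sinh t/Real.cosh t^2) t := by
  have h1 : HasDerivAt (fun t : ℝ => (Real.cosh t)⁻¹) (-(Real.sinh t)/Real.cosh t^2) t :=
    (Real.hasDerivAt_cosh t).inv (ne_of_gt (Real.cosh_pos t))
  have h2 : HasDerivAt (fun t : ℝ => Real.cosh (a*t)) (Real.sinh (a*t) * a) t := by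
    have := (Real.hasDerivAt_cosh (a*t)).comp t ((hasDerivAt_id t).const_mul a)
    simpa [Function.comp_def] using this
  have h3 : HasDerivAt (fun t : ℝ => (Real.cosh (a*t))⁻¹)
      (-(Real.sinh (a*t) * a)/Real.cosh (a*t)^2) t :=
    h2.inv (ne_of_gt (Real.cosh_pos _))
  have h := h1.sub h3
  simp only [one_div]
  refine h.congr_deriv ?_
  ring

lemma phi_continuous (a : ℝ) : Continuous (fun t => 1/Real.cosh t - 1/Real.cosh (a*t)) := by
  apply Continuous.sub
  · exact continuous_const.div Real.continuous_cosh (fun x => (Real.cosh_pos x).ne')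
  · exact continuous_const.div (Real.continuous_cosh.comp (continuous_const.mul continuous_id))
      (fun x => (Real.cosh_pos _).ne')

lemma phi_strictMono {a : ℝ} (ha : 3 ≤ a) :
    StrictMonoOn (fun t => 1/Real.cosh t - 1/Real.cosh (a*t)) (Set.Icc 0 (1/(2*a))) := by
  have ha0 : (0:ℝ) < a := by linarith
  apply strictMonoOn_of_deriv_pos (convex_Icc _ _) ((phi_continuous a).continuousOn)
  intro t ht
  rw [interior_Icc] at ht
  obtain ⟨ht0, ht1⟩ := ht
  rw [(hasDerivAt_phi a t).deriv]
  have hat : a * t < 1/2 := by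
    rw [lt_div_iff₀ (by linarith : (0:ℝ) < 2*a)] at ht1
    linarith
  have hta : t ≤ a * t := by nlinarith
  have hs1 : 0 < Real.sinh t := by
    have := Real.sinh_lt_sinh.mpr ht0
    rwa [Real.sinh_zero] at this
  have hs2 : Real.sinh t ≤ Real.sinh (a*t) := Real.sinh_le_sinh.mpr hta
  have hc1 : 1 ≤ Real.cosh t ^ 2 := by nlinarith [Real.one_le_cosh t]
  have hc2pos : 0 < Real.cosh (a*t)^2 := pow_pos (Real.cosh_pos _) 2
  have hc2 : Real.cosh (a*t)^2 < a := by
    have e1 : Real.cosh (a*t) ≤ Real.exp (a*t) := cosh_le_exp (by nlinarith)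
    have e2 : Real.cosh (a*t)^2 ≤ Real.exp (a*t) ^ 2 := by
      apply sq_le_sq' <;> nlinarith [Real.cosh_pos (a*t), Real.exp_pos (a*t)]
    have e3 : Real.exp (a*t) ^ 2 = Real.exp (2*(a*t)) := by
      rw [← Real.exp_nat_mul]
      norm_num
    have e4 : Real.exp (2*(a*t)) ≤ Real.exp 1 := Real.exp_le_exp.mpr (by linarith)
    have e5 := Real.exp_one_lt_d9
    calc Real.cosh (a*t)^2 ≤ Real.exp (2*(a*t)) := by rw [← e3]; exact e2
      _ ≤ Real.exp 1 := e4
      _ < 2.7182818286 := e5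
      _ ≤ a := by linarith
  have key : Real.sinh t / Real.cosh t ^2 < a * Real.sinh (a*t) / Real.cosh (a*t)^2 := by
    calc Real.sinh t / Real.cosh t ^2 ≤ Real.sinh t := div_le_self hs1.le hc1
      _ ≤ Real.sinh (a*t) := hs2
      _ < a * Real.sinh (a*t) / Real.cosh (a*t)^2 := by
          rw [lt_div_iff₀ hc2pos]
          have : 0 < Real.sinh (a*t) := lt_of_lt_of_le hs1 hs2
          nlinarith
  linarith

end LFPE

set_option maxHeartbeats 1000000 in
open LFPE in
/-- For small `ε > 0`, the larger solution `x₂ ∈ (0,1)` of `h(x) + ε = x`, where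
`h(x) = sech((2L+1)·arcsech x)`, satisfies `x₂ = 1 - ε/(4(L²+L)) + O(ε²)`. -/
theorem larger_fixed_point_expansion (L : ℕ) (hL : 0 < L) :
    ∃ C ε₀ : ℝ, 0 < C ∧ 0 < ε₀ ∧
      ∀ ε : ℝ, 0 < ε → ε < ε₀ →
        ∃ x₂ : ℝ, x₂ ∈ Set.Ioo (0 : ℝ) 1 ∧
          sech ((2 * L + 1 : ℝ) * arcsech x₂) + ε = x₂ ∧
          (∀ y : ℝ, y ∈ Set.Ioo (0 : ℝ) 1 →
            sech ((2 * L + 1 : ℝ) * arcsech y) + ε = y → y ≤ x₂) ∧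
          |x₂ - (1 - ε / (4 * ((L : ℝ) ^ 2 + L)))| ≤ C * ε ^ 2 := by
  set a : ℝ := 2 * (L : ℝ) + 1 with ha_def
  have hL1 : (1:ℝ) ≤ (L:ℝ) := by exact_mod_cast hL
  have ha : 3 ≤ a := by rw [ha_def]; linarith
  have ha0 : 0 < a := by linarith
  set φ : ℝ → ℝ := fun t => 1/Real.cosh t - 1/Real.cosh (a*t) with hφ_def
  set t₀ : ℝ := 1/(4*a^2) with ht₀_def
  clear_value a
  have ht₀pos : 0 < t₀ := by rw [ht₀_def]; positivity
  have ht₀le : t₀ ≤ 1/(2*a) := by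
    rw [ht₀_def, div_le_div_iff₀ (by positivity) (by positivity)]
    nlinarith
  have ht₀le1 : t₀ ≤ 1 := by
    rw [ht₀_def, div_le_one (by positivity)]
    nlinarith
  have hφ0 : φ 0 = 0 := by
    simp [hφ_def, Real.cosh_zero]
  refine ⟨a^4, φ t₀, pow_pos ha0 4, ?_, ?_⟩
  · -- 0 < φ t₀
    have h1 : Real.cosh t₀ < Real.cosh (a * t₀) := by
      rw [Real.cosh_lt_cosh, abs_of_pos ht₀pos, abs_of_pos (by positivity)]
      nlinarith
    have := one_div_lt_one_div_of_lt (Real.cosh_pos t₀) h1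
    simp only [hφ_def]
    linarith
  intro ε hε hεlt
  -- IVT to find t₂
  have hIVT := intermediate_value_Ioo ht₀pos.le ((phi_continuous a).continuousOn
    (s := Set.Icc 0 t₀))
  have hεmem : ε ∈ Set.Ioo (φ 0) (φ t₀) := by
    rw [hφ0]; exact ⟨hε, hεlt⟩
  obtain ⟨t, ht_mem, hφt⟩ := hIVT hεmem
  obtain ⟨ht0, ht1⟩ := ht_mem
  have hφt' : φ t = ε := hφt
  have hcosht := Real.cosh_pos t
  have hcoshat := Real.cosh_pos (a*t)
  refine ⟨1/Real.cosh t, ?_, ?_, ?_, ?_⟩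
  · -- membership in (0,1)
    constructor
    · positivity
    · rw [div_lt_one hcosht]
      exact Real.one_lt_cosh.mpr (ne_of_gt ht0)
  · -- equation
    show sech (a * arcsech (1/Real.cosh t)) + ε = 1/Real.cosh t
    rw [arcsech_sech ht0.le]
    show 1/Real.cosh (a*t) + ε = 1/Real.cosh t
    have := hφt'
    simp only [hφ_def] at this
    linarith
  · -- maximality
    intro y hy heq
    by_contra hylt
    push_neg at hylt
    obtain ⟨hy0, hy1⟩ := hy
    set s : ℝ := arcsech y with hs_def
    have hspos : 0 < s := arcsech_pos hy0 hy1
    have hsechs : 1/Real.cosh s = y := sech_arcsech hy0 hy1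
    have hφs : φ s = ε := by
      simp only [hφ_def]
      rw [hsechs]
      have : sech (a * s) + ε = y := heq
      unfold sech at this
      linarith
    -- y > 1/cosh t means cosh s < cosh t means s < t
    have hcs : Real.cosh s < Real.cosh t := by
      have h1 : 1/Real.cosh t < 1/Real.cosh s := by rw [hsechs]; exact hylt
      by_contra hc
      push_neg at hc
      have : 1/Real.cosh s ≤ 1/Real.cosh t :=
        one_div_le_one_div_of_le hcosht hc
      linarith
    have hst : s < t := by
      rw [Real.cosh_lt_cosh, abs_of_pos hspos, abs_of_pos ht0] at hcs
      exact hcs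
    have hmono := phi_strictMono ha (a := a)
    have h1 : φ s < φ t := hmono ⟨hspos.le, by linarith⟩ ⟨ht0.le, by linarith⟩ hst
    rw [hφs, hφt'] at h1
    exact lt_irrefl ε h1
  · -- the estimate
    clear hIVT hεmem hφt hφ0
    have hεt : ε = 1/Real.cosh t - 1/Real.cosh (a*t) := by
      have := hφt'
      simp only [hφ_def] at this
      linarith
    have ht1' : t ≤ 1/(4*a^2) := by rw [← ht₀_def]; exact ht1.le
    clear hεlt hφt' ht1 ht₀le ht₀le1 ht₀pos ht₀_def hφ_def
    clear φ t₀
    have hD : 4 * ((L : ℝ)^2 + L) = a^2 - 1 := by rw [ha_def]; ring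
    have htle1 : t ≤ 1 := by
      have : (1:ℝ)/(4*a^2) ≤ 1 := by rw [div_le_one (by positivity)]; nlinarith
      linarith
    have hatle1 : a * t ≤ 1 := by
      have h1 : a * t ≤ a * (1/(4*a^2)) := by nlinarith
      have h2 : a * (1/(4*a^2)) ≤ 1 := by
        rw [mul_one_div, div_le_one (by positivity)]
        nlinarith
      linarith
    have hA1 := sech_quad ht0.le htle1
    have hA2 := sech_quad (t := a*t) (mul_nonneg ha0.le ht0.le) hatle1
    rw [abs_le] at hA1 hA2
    obtain ⟨hA1l, hA1u⟩ := hA1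
    obtain ⟨hA2l, hA2u⟩ := hA2
    have hat4 : (a*t)^4 = a^4 * t^4 := by ring
    have hat2 : (a*t)^2 = a^2 * t^2 := by ring
    rw [hat4, hat2] at hA2l hA2u
    have ha4pos : (0:ℝ) < a^4 := by positivity
    -- 16 a⁴ t² ≤ 1
    have ht2b : 16*a^4*t^2 ≤ 1 := by
      have h1 : 4*a^2*t ≤ 1 := by
        have h := ht1'
        rw [le_div_iff₀ (by positivity : (0:ℝ) < 4*a^2)] at h
        linarith
      have hx0 : (0:ℝ) ≤ 4*a^2*t := by positivity
      nlinarith [mul_le_mul_of_nonneg_left h1 hx0]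
    have ht4nn : (0:ℝ) ≤ t^4 := pow_nonneg ht0.le 4
    -- error bound: |ε - ((a²-1)/2) t²| ≤ 2 a⁴ t⁴
    have ha41 : (0:ℝ) ≤ a^4 - 1 := by nlinarith
    have hEl : (a^2-1)/2 * t^2 - 2*a^4*t^4 ≤ ε := by
      rw [hεt]
      nlinarith [mul_nonneg ht4nn ha41]
    have hEu : ε ≤ (a^2-1)/2 * t^2 + 2*a^4*t^4 := by
      rw [hεt]
      linarith [(show (0:ℝ) ≤ a^4*t^4 - t^4 by nlinarith [mul_nonneg ht4nn ha41]), hA1u, hA2l]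
    -- t² ≤ ε/3
    have ht2ε : t^2 ≤ ε/3 := by
      have h1 : 2*a^4*t^4 ≤ t^2/8 := by
        nlinarith [mul_le_mul_of_nonneg_left ht2b (show (0:ℝ) ≤ t^2/8 by positivity)]
      have h2 : (a^2-1)/2 ≥ 4 := by nlinarith
      nlinarith [sq_nonneg t]
    have ht4ε : t^4 ≤ ε^2/9 := by
      have h := mul_le_mul ht2ε ht2ε (sq_nonneg t) (by linarith : (0:ℝ) ≤ ε/3)
      nlinarith [h]
    rw [hD]
    have hd8 : (8:ℝ) ≤ a^2 - 1 := by nlinarith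
    have hdpos : (0:ℝ) < a^2 - 1 := by linarith
    have hkey : (0:ℝ) ≤ a^4 * t^4 * (a^2 - 9) :=
      mul_nonneg (mul_nonneg ha4pos.le ht4nn) (by nlinarith)
    -- bound on ε/(a²-1)
    have hdivu : ε/(a^2-1) ≤ t^2/2 + a^4*t^4/4 := by
      rw [div_le_iff₀ hdpos]
      linarith [hkey, hEu]
    have hdivl : t^2/2 - a^4*t^4/4 ≤ ε/(a^2-1) := by
      rw [le_div_iff₀ hdpos]
      linarith [hkey, hEl]
    have ha81 : (81:ℝ) ≤ a^4 := by
      have h9 : (9:ℝ) ≤ a^2 := by nlinarith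
      nlinarith [mul_le_mul h9 h9 (by norm_num) (by positivity : (0:ℝ) ≤ a^2)]
    have hfin : t^4 + a^4*t^4/4 ≤ a^4 * ε^2 := by
      have h1 : t^4 + a^4*t^4/4 ≤ a^4 * t^4 := by
        linarith [mul_nonneg ht4nn (by linarith : (0:ℝ) ≤ a^4 - 81)]
      have h2 : a^4 * t^4 ≤ a^4 * (ε^2/9) := mul_le_mul_of_nonneg_left ht4ε ha4pos.le
      linarith [mul_nonneg ha4pos.le (sq_nonneg ε)]
    rw [abs_le]
    constructor
    · linarith
    · linarith
end
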